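/- arXiv:1508.07256 — 4 statements merged into one kernel-verified Lean document; each statement's English description precedes it below -/
import Mathlib

section
/- Let s : ℕ → ℕ and let C be a class of finite graphs. (a) If C is strongly limit quasi-wide with margin s, then C is quasi-wide with margin s. (b) If C is strongly uniformly limit quasi-wide with margin s, then C is uniformly quasi-wide with margin s. -/
namespace NWD

open SimpleGraph Filter

/-! ### Shallow minors -/

/-- A `d`-shallow minor model of `H` in `G`: a family of pairwise disjoint branch sets,
each connected of radius at most `d` (witnessed by a center joined to every vertex of the
branch set by a walk of length at most `d` inside the branch set), such that every edge of `H`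
is realized by an edge of `G` between the corresponding branch sets. -/
def IsShallowMinorModel {V W : Type} (G : SimpleGraph V) (H : SimpleGraph W) (d : ℕ)
    (α : W → G.Subgraph) : Prop :=
  (∀ w : W, ∃ c : (α w).verts, ∀ x : (α w).verts, ∃ p : (α w).coe.Walk c x, p.length ≤ d) ∧
  (∀ w w' : W, w ≠ w' → Disjoint (α w).verts (α w').verts) ∧
  (∀ w w' : W, H.Adj w w' → ∃ x ∈ (α w).verts, ∃ y ∈ (α w').verts, G.Adj x y)

/-- `H` is a shallow minor of `G` at depth `d`. -/
def IsShallowMinor {V W : Type} (G : SimpleGraph V) (H : SimpleGraph W) (d : ℕ) : Prop :=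
  ∃ α : W → G.Subgraph, IsShallowMinorModel G H d α

/-! ### Topological shallow minors -/

/-- A `d`-shallow topological minor model of `H` in `G`: an injective map `f` on vertices
together with, for every edge `uv` of `H`, a path of length at most `2d+1` in `G` from `f u`
to `f v`; the paths are pairwise vertex-disjoint apart from possibly sharing endpoints. -/
def IsTopMinorModel {V W : Type} (G : SimpleGraph V) (H : SimpleGraph W) (d : ℕ)
    (f : W → V) (P : ∀ ⦃u v : W⦄, H.Adj u v → G.Walk (f u) (f v)) : Prop :=
  Function.Injective f ∧
  (∀ ⦃u v : W⦄ (h : H.Adj u v), (P h).IsPath) ∧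
  (∀ ⦃u v : W⦄ (h : H.Adj u v), (P h).length ≤ 2 * d + 1) ∧
  (∀ ⦃u v : W⦄ (h : H.Adj u v), P h.symm = (P h).reverse) ∧
  (∀ ⦃u v u' v' : W⦄ (h : H.Adj u v) (h' : H.Adj u' v'), s(u, v) ≠ s(u', v') →
    ∀ x : V, x ∈ (P h).support → x ∈ (P h').support →
      (x = f u ∨ x = f v) ∧ (x = f u' ∨ x = f v'))

/-- `H` is a topological shallow minor of `G` at depth `d`. -/
def IsTopShallowMinor {V W : Type} (G : SimpleGraph V) (H : SimpleGraph W) (d : ℕ) : Prop :=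
  ∃ (f : W → V) (P : ∀ ⦃u v : W⦄, H.Adj u v → G.Walk (f u) (f v)),
    IsTopMinorModel G H d f P

/-! ### Ultraproducts of graphs -/

/-- The setoid identifying sequences agreeing on a set of the ultrafilter. -/
def prodSetoid (U : Ultrafilter ℕ) (Vs : ℕ → Type) : Setoid (∀ n, Vs n) where
  r g h := ∀ᶠ n in (U : Filter ℕ), g n = h n
  iseqv := by
    constructor
    · intro g; exact Eventually.of_forall fun n => rfl
    · intro g h hg; exact hg.mono fun n hn => hn.symm
    · intro g h k h1 h2; filter_upwards [h1, h2] with n e1 e2; rw [e1, e2]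

/-- The vertex set of the ultraproduct. -/
def UVertex (U : Ultrafilter ℕ) (Vs : ℕ → Type) : Type := Quotient (prodSetoid U Vs)

/-- The ultraproduct of a sequence of graphs along the ultrafilter `U`. -/
def UGraph (U : Ultrafilter ℕ) {Vs : ℕ → Type} (Gs : ∀ n, SimpleGraph (Vs n)) :
    SimpleGraph (UVertex U Vs) where
  Adj x y := Quotient.liftOn₂ x y
    (fun g h => ∀ᶠ n in (U : Filter ℕ), (Gs n).Adj (g n) (h n))
    (by
      intro a b a' b' ha hb
      apply propext
      constructor
      · intro hadj; filter_upwards [hadj, ha, hb] with n h1 h2 h3; rw [← h2, ← h3]; exact h1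
      · intro hadj; filter_upwards [hadj, ha, hb] with n h1 h2 h3; rw [h2, h3]; exact h1)
  symm := by
    constructor
    intro x y
    refine Quotient.inductionOn₂ x y ?_
    intro g h hadj
    exact hadj.mono fun n hn => hn.symm
  loopless := by
    constructor
    intro x
    refine Quotient.inductionOn x ?_
    intro g hadj
    obtain ⟨n, hn⟩ := hadj.exists
    exact (Gs n).loopless.irrefl _ hn

/-! ### Graph classes and class limits -/

/-- A class of graphs: a predicate on graphs over arbitrary vertex types. -/
def GraphClass : Type 1 := ∀ V : Type, SimpleGraph V → Prop

/-- `C` is a class of finite graphs. -/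
def FiniteClass (C : GraphClass) : Prop :=
  ∀ (V : Type) (G : SimpleGraph V), C V G → Finite V

/-- `H` is (isomorphic to) a subgraph of `G`. -/
def IsSubgraphOf {W V : Type} (H : SimpleGraph W) (G : SimpleGraph V) : Prop :=
  ∃ f : W → V, Function.Injective f ∧ ∀ ⦃u v : W⦄, H.Adj u v → G.Adj (f u) (f v)

/-- Membership in the class limit `C*`: subgraphs of ultraproducts of sequences from `C`. -/
def InLimit (U : Ultrafilter ℕ) (C : GraphClass) {W : Type} (H : SimpleGraph W) : Prop :=
  ∃ (Vs : ℕ → Type) (Gs : ∀ n, SimpleGraph (Vs n)),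
    (∀ n, C (Vs n) (Gs n)) ∧ IsSubgraphOf H (UGraph U Gs)

/-- `H ∈ C ▽ d`. -/
def InClassMinor (C : GraphClass) (d : ℕ) {W : Type} (H : SimpleGraph W) : Prop :=
  ∃ (V : Type) (G : SimpleGraph V), C V G ∧ IsShallowMinor G H d

/-- `H ∈ C ∇̃ d`. -/
def InClassTopMinor (C : GraphClass) (d : ℕ) {W : Type} (H : SimpleGraph W) : Prop :=
  ∃ (V : Type) (G : SimpleGraph V), C V G ∧ IsTopShallowMinor G H d

/-- `H ∈ C* ▽ d`. -/
def InLimitMinor (U : Ultrafilter ℕ) (C : GraphClass) (d : ℕ) {W : Type}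
    (H : SimpleGraph W) : Prop :=
  ∃ (V : Type) (G : SimpleGraph V), InLimit U C G ∧ IsShallowMinor G H d

/-- `H ∈ C* ∇̃ d`. -/
def InLimitTopMinor (U : Ultrafilter ℕ) (C : GraphClass) (d : ℕ) {W : Type}
    (H : SimpleGraph W) : Prop :=
  ∃ (V : Type) (G : SimpleGraph V), InLimit U C G ∧ IsTopShallowMinor G H d

/-- `C` is somewhere dense: all finite graphs are shallow minors at some fixed depth. -/
def SomewhereDense (C : GraphClass) : Prop :=
  ∃ d : ℕ, ∀ (W : Type) (H : SimpleGraph W), Finite W → InClassMinor C d H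

/-- `C` is topologically somewhere dense. -/
def TopSomewhereDense (C : GraphClass) : Prop :=
  ∃ d : ℕ, ∀ (W : Type) (H : SimpleGraph W), Finite W → InClassTopMinor C d H

/-- The countably infinite clique `K_ω`. -/
def Komega : SimpleGraph ℕ := ⊤

/-- The clique on continuum many vertices `K_𝔠`. -/
def Kcontinuum : SimpleGraph (Set ℕ) := ⊤

/-- `C` is hereditary: closed under induced subgraphs. -/
def Hereditary (C : GraphClass) : Prop :=
  ∀ (V : Type) (G : SimpleGraph V), C V G →
    ∀ (W : Type) (f : W → V), Function.Injective f → C W (G.comap f)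

/-! ### Scattered sets and quasi-wideness -/

/-- `X` is a `d`-scattered set of `G - S`: it avoids `S`, and any two distinct vertices of `X`
are at distance greater than `2d` in `G - S` (every connecting walk avoiding `S` is longer
than `2d`). -/
def ScatteredIn {V : Type} (G : SimpleGraph V) (d : ℕ) (S X : Set V) : Prop :=
  Disjoint X S ∧ ∀ u ∈ X, ∀ v ∈ X, u ≠ v →
    ∀ p : G.Walk u v, (∀ x ∈ p.support, x ∉ S) → 2 * d < p.length

/-- `C` is quasi-wide with margin `s`. -/
def QuasiWide (C : GraphClass) (s : ℕ → ℕ) : Prop :=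
  ∀ d m : ℕ, ∃ N : ℕ, ∀ (V : Type) (G : SimpleGraph V), C V G → N ≤ Nat.card V →
    ∃ S X : Set V, S.Finite ∧ S.ncard ≤ s d ∧ X.Finite ∧ X.ncard = m ∧ ScatteredIn G d S X

/-- `C` is uniformly quasi-wide with margin `s`. -/
def UniformlyQuasiWide (C : GraphClass) (s : ℕ → ℕ) : Prop :=
  ∀ d m : ℕ, ∃ N : ℕ, ∀ (V : Type) (G : SimpleGraph V), C V G →
    ∀ W : Set V, N ≤ W.ncard →
      ∃ S X : Set V, S.Finite ∧ S.ncard ≤ s d ∧ X ⊆ W ∧ X.Finite ∧ X.ncard = m ∧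
        ScatteredIn G d S X

/-- `C` is limit quasi-wide. -/
def LimitQW (U : Ultrafilter ℕ) (C : GraphClass) : Prop :=
  ∀ (d : ℕ) (V : Type) (G : SimpleGraph V), InLimit U C G → Infinite V →
    ∃ S X : Set V, S.Finite ∧ X.Infinite ∧ ScatteredIn G d S X

/-- `C` is uniformly limit quasi-wide. -/
def UniformLimitQW (U : Ultrafilter ℕ) (C : GraphClass) : Prop :=
  ∀ (d : ℕ) (V : Type) (G : SimpleGraph V), InLimit U C G →
    ∀ W : Set V, W.Infinite →
      ∃ S X : Set V, S.Finite ∧ X ⊆ W ∧ X.Infinite ∧ ScatteredIn G d S X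

/-- `C` is strongly limit quasi-wide with margin `s`. -/
def StrongLimitQW (U : Ultrafilter ℕ) (C : GraphClass) (s : ℕ → ℕ) : Prop :=
  ∀ (d : ℕ) (V : Type) (G : SimpleGraph V), InLimit U C G → Infinite V →
    ∃ S X : Set V, S.Finite ∧ S.ncard ≤ s d ∧ X.Infinite ∧ ScatteredIn G d S X

/-- `C` is strongly uniformly limit quasi-wide with margin `s`. -/
def StrongUniformLimitQW (U : Ultrafilter ℕ) (C : GraphClass) (s : ℕ → ℕ) : Prop :=
  ∀ (d : ℕ) (V : Type) (G : SimpleGraph V), InLimit U C G →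
    ∀ W : Set V, W.Infinite →
      ∃ S X : Set V, S.Finite ∧ S.ncard ≤ s d ∧ X ⊆ W ∧ X.Infinite ∧ ScatteredIn G d S X

/-! ### The splitter game -/

/-- One round of the splitter game: from arena `A`, connector picks `v`, splitter picks `W`;
the new arena consists of the vertices of `A` outside `W` at distance at most `d` from `v`
in the subgraph induced by `A`. -/
def arenaStep {V : Type} (G : SimpleGraph V) (d : ℕ) (A : Set V) (v : V) (W : Set V) : Set V :=
  {x | x ∈ A ∧ x ∉ W ∧ ∃ p : G.Walk v x, p.length ≤ d ∧ ∀ y ∈ p.support, y ∈ A}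

/-- The arena after a (chronological) history of moves. -/
def arenaAfter {V : Type} (G : SimpleGraph V) (d : ℕ) (hist : List (V × Set V)) : Set V :=
  hist.foldl (fun A mv => arenaStep G d A mv.1 mv.2) Set.univ

/-- A strategy for splitter: given the history and connector's new move, produce a set. -/
def SplitterStrategy (V : Type) : Type := List (V × Set V) → V → Set V

/-- The history of the play where connector plays `c` and splitter follows `σ`. -/
def splitterHist {V : Type} (σ : SplitterStrategy V) (c : ℕ → V) : ℕ → List (V × Set V)
  | 0 => []
  | n + 1 => splitterHist σ c n ++ [(c n, σ (splitterHist σ c n) (c n))]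

/-- Connector's first `n` moves are valid (inside the successive arenas). -/
def ConsistentPlay {V : Type} (G : SimpleGraph V) (d : ℕ) (σ : SplitterStrategy V)
    (c : ℕ → V) (n : ℕ) : Prop :=
  ∀ k < n, c k ∈ arenaAfter G d (splitterHist σ c k)

/-- `σ` is a winning strategy for splitter in the limit `d`-splitter game on `G`:
its moves are valid (finite subsets of the arena) along any consistent play, and no
infinite sequence of valid connector moves exists. -/
def SplitterWinsLimit {V : Type} (G : SimpleGraph V) (d : ℕ) (σ : SplitterStrategy V) : Prop :=
  (∀ (c : ℕ → V) (n : ℕ), ConsistentPlay G d σ c (n + 1) →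
      (σ (splitterHist σ c n) (c n)).Finite ∧
      σ (splitterHist σ c n) (c n) ⊆ arenaAfter G d (splitterHist σ c n)) ∧
  (∀ c : ℕ → V, ∃ n : ℕ, c n ∉ arenaAfter G d (splitterHist σ c n))

/-- `σ` is a winning strategy for splitter in the `(ℓ, m, d)`-splitter game on `G`. -/
def SplitterWinsGame {V : Type} (G : SimpleGraph V) (l m d : ℕ) (σ : SplitterStrategy V) :
    Prop :=
  (∀ (c : ℕ → V) (n : ℕ), ConsistentPlay G d σ c (n + 1) →
      (σ (splitterHist σ c n) (c n)).Finite ∧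
      (σ (splitterHist σ c n) (c n)).ncard ≤ m ∧
      σ (splitterHist σ c n) (c n) ⊆ arenaAfter G d (splitterHist σ c n)) ∧
  (∀ c : ℕ → V, ∃ n ≤ l, c n ∉ arenaAfter G d (splitterHist σ c n))

/-- A strategy for connector: given the history, produce a vertex. -/
def ConnectorStrategy (V : Type) : Type := List (V × Set V) → V

/-- The history of the play where connector follows `τ` and splitter plays `w`. -/
def connectorHist {V : Type} (τ : ConnectorStrategy V) (w : ℕ → Set V) :
    ℕ → List (V × Set V)
  | 0 => []
  | n + 1 => connectorHist τ w n ++ [(τ (connectorHist τ w n), w n)]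

/-- `τ` is a winning strategy for connector in the limit `d`-splitter game on `G`:
as long as splitter's moves are valid, connector's moves stay in the arena forever. -/
def ConnectorWinsLimit {V : Type} (G : SimpleGraph V) (d : ℕ) (τ : ConnectorStrategy V) :
    Prop :=
  ∀ (w : ℕ → Set V) (n : ℕ),
    (∀ k < n, (w k).Finite ∧ w k ⊆ arenaAfter G d (connectorHist τ w k)) →
    τ (connectorHist τ w n) ∈ arenaAfter G d (connectorHist τ w n)

/-- `τ` is a winning strategy for connector in the `(ℓ, m, d)`-splitter game on `G`:
the arena stays nonempty for `ℓ` rounds, i.e. connector has valid moves at rounds `0,…,ℓ`. -/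
def ConnectorWinsGame {V : Type} (G : SimpleGraph V) (l m d : ℕ) (τ : ConnectorStrategy V) :
    Prop :=
  ∀ (w : ℕ → Set V) (n : ℕ), n ≤ l →
    (∀ k < n, (w k).Finite ∧ (w k).ncard ≤ m ∧
      w k ⊆ arenaAfter G d (connectorHist τ w k)) →
    τ (connectorHist τ w n) ∈ arenaAfter G d (connectorHist τ w n)

/-- `C` is winning for splitter. -/
def WinningForSplitter (C : GraphClass) : Prop :=
  ∀ d : ℕ, ∃ l m : ℕ, ∀ (V : Type) (G : SimpleGraph V), C V G →
    ∃ σ : SplitterStrategy V, SplitterWinsGame G l m d σ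

/-- `C` is limit winning for splitter. -/
def LimitWinningForSplitter (U : Ultrafilter ℕ) (C : GraphClass) : Prop :=
  ∀ (d : ℕ) (V : Type) (G : SimpleGraph V), InLimit U C G →
    ∃ σ : SplitterStrategy V, SplitterWinsLimit G d σ

/-! ### First-order satisfaction in graphs -/

/-- `G` satisfies the first-order sentence `φ` in the language of graphs. -/
def GSat {V : Type} (G : SimpleGraph V) (φ : FirstOrder.Language.graph.Sentence) : Prop :=
  @FirstOrder.Language.Sentence.Realize FirstOrder.Language.graph V G.structure φ


variable {U : Ultrafilter ℕ} {Vs : ℕ → Type}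

def mkU (U : Ultrafilter ℕ) {Vs : ℕ → Type} (g : ∀ n, Vs n) : UVertex U Vs :=
  Quotient.mk (prodSetoid U Vs) g

lemma mkU_eq_iff {g h : ∀ n, Vs n} :
    mkU U g = mkU U h ↔ ∀ᶠ n in (U : Filter ℕ), g n = h n :=
  ⟨fun e => Quotient.exact e, fun e => Quotient.sound e⟩

lemma mkU_out (v : UVertex U Vs) : mkU U (Quotient.out v) = v := Quotient.out_eq v

lemma uadj_iff {Gs : ∀ n, SimpleGraph (Vs n)} {g h : ∀ n, Vs n} :
    (UGraph U Gs).Adj (mkU U g) (mkU U h) ↔ ∀ᶠ n in (U : Filter ℕ), (Gs n).Adj (g n) (h n) :=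
  Iff.rfl

lemma finite_not_mem (hU : ∀ a : ℕ, {a} ∉ U) {s : Set ℕ} (hs : s.Finite) : s ∉ U := by
  refine Set.Finite.induction_on s hs (Filter.empty_notMem _) ?_
  intro a t _ _ ih h
  rw [Set.insert_eq, Ultrafilter.union_mem_iff] at h
  exact h.elim (hU a) ih

lemma ultra_const {T : Type} [Finite T] (f : ℕ → T) :
    ∃ t : T, ∀ᶠ n in (U : Filter ℕ), f n = t := by
  by_contra h
  push_neg at h
  have h' : ∀ t : T, ∀ᶠ n in (U : Filter ℕ), f n ≠ t := by
    intro t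
    have := h t
    exact this
  have := (Filter.eventually_all.2 h').exists
  obtain ⟨n, hn⟩ := this
  exact hn (f n) rfl

lemma walk_transfer {Gs : ∀ n, SimpleGraph (Vs n)} (l : ℕ) (y : ℕ → ∀ n, Vs n)
    (hadj : ∀ t < l, ∀ᶠ n in (U : Filter ℕ), (Gs n).Adj (y t n) (y (t+1) n)) :
    ∃ p : (UGraph U Gs).Walk (mkU U (y 0)) (mkU U (y l)), p.length = l ∧
      ∀ v ∈ p.support, ∃ t ≤ l, v = mkU U (y t) := by
  induction l with
  | zero =>
    refine ⟨Walk.nil, rfl, ?_⟩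
    intro v hv
    simp only [Walk.support_nil, List.mem_singleton] at hv
    exact ⟨0, le_refl 0, hv⟩
  | succ l ih =>
    obtain ⟨p, hlen, hsup⟩ := ih fun t ht => hadj t (ht.trans (Nat.lt_succ_self l))
    have hedge : (UGraph U Gs).Adj (mkU U (y l)) (mkU U (y (l+1))) :=
      uadj_iff.2 (hadj l (Nat.lt_succ_self l))
    refine ⟨p.concat hedge, ?_, ?_⟩
    · rw [Walk.length_concat, hlen]
    · intro v hv
      rw [Walk.support_concat, List.mem_append] at hv
      rcases hv with hv | hv
      · obtain ⟨t, ht, rfl⟩ := hsup v hv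
        exact ⟨t, ht.trans (Nat.le_succ l), rfl⟩
      · simp only [List.mem_singleton] at hv
        exact ⟨l+1, le_refl _, hv⟩

noncomputable def outU (v : UVertex U Vs) : ∀ n, Vs n := Quotient.out v

lemma mkU_outU (v : UVertex U Vs) : mkU U (outU v) = v := Quotient.out_eq v

lemma uvertex_big (hU : ∀ a : ℕ, {a} ∉ U) (Wn : ∀ n, Set (Vs n))
    (hWfin : ∀ n, (Wn n).Finite) (hWcard : ∀ n, n + 1 ≤ (Wn n).ncard) :
    {v : UVertex U Vs | ∀ᶠ n in (U : Filter ℕ), outU v n ∈ Wn n}.Infinite := by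
  set Wstar := {v : UVertex U Vs | ∀ᶠ n in (U : Filter ℕ), outU v n ∈ Wn n} with hWs
  have key : ∀ F : Set (UVertex U Vs), F.Finite → ∃ v ∈ Wstar, v ∉ F := by
    intro F hF
    set Im : ∀ n, Set (Vs n) := fun n => (fun σ => outU σ n) '' F with hIm
    have hImcard : ∀ n, (Im n).ncard ≤ F.ncard := fun n => Set.ncard_image_le hF
    have hne : ∀ n, ((if F.ncard ≤ n then Wn n \ Im n else Wn n)).Nonempty := by
      intro n
      split_ifs with h
      · rw [Set.diff_nonempty]
        intro hsub
        have := Set.ncard_le_ncard hsub (hF.image _)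
        have := hImcard n
        have := hWcard n
        omega
      · exact Set.nonempty_of_ncard_ne_zero (by have := hWcard n; omega)
    choose w hw using hne
    have hwW : ∀ n, w n ∈ Wn n := by
      intro n
      have := hw n
      split_ifs at this with h
      · exact this.1
      · exact this
    refine ⟨mkU U w, ?_, ?_⟩
    · have : ∀ᶠ n in (U : Filter ℕ), outU (mkU U w) n = w n :=
        Quotient.exact (mkU_outU (mkU U w))
      exact this.mono fun n hn => hn ▸ hwW n
    · intro hmem
      have heq : mkU U (outU (mkU U w)) = mkU U w := mkU_outU _
      have hev : ∀ᶠ n in (U : Filter ℕ), w n = outU (mkU U w) n :=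
        (mkU_eq_iff.1 heq).mono fun n hn => hn.symm
      have hsub : {n | w n = outU (mkU U w) n} ⊆ {n | n < F.ncard} := by
        intro n hn
        by_contra hlt
        have hle : F.ncard ≤ n := Nat.le_of_not_lt hlt
        have := hw n
        rw [if_pos hle] at this
        exact this.2 ⟨mkU U w, hmem, hn.symm⟩
      have hmemU : {n | w n = outU (mkU U w) n} ∈ (U : Filter ℕ) := hev
      exact finite_not_mem hU ((Set.finite_Iio _).subset hsub)
        hmemU
  by_contra hfin
  rw [Set.not_infinite] at hfin
  obtain ⟨v, hv, hv2⟩ := key Wstar hfin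
  exact hv2 hv

lemma ne_eventually {a b : UVertex U Vs} (h : a ≠ b) :
    ∀ᶠ n in (U : Filter ℕ), outU a n ≠ outU b n := by
  have hne : ¬ ∀ᶠ n in (U : Filter ℕ), outU a n = outU b n := by
    intro hev
    exact h (by rw [← mkU_outU a, ← mkU_outU b]; exact mkU_eq_iff.2 hev)
  rwa [← Ultrafilter.eventually_not] at hne

lemma core (hU : ∀ a : ℕ, {a} ∉ U) {Gs : ∀ n, SimpleGraph (Vs n)}
    (d m sd : ℕ) (Wn : ∀ n, Set (Vs n))
    (S X : Set (UVertex U Vs)) (hS : S.Finite) (hX : X.Infinite)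
    (hXW : ∀ v ∈ X, ∀ᶠ n in (U : Filter ℕ), outU v n ∈ Wn n)
    (hscat : ScatteredIn (UGraph U Gs) d S X) (hSsize : S.ncard ≤ sd)
    (hno : ∀ n, ¬ ∃ S' X' : Set (Vs n), S'.Finite ∧ S'.ncard ≤ sd ∧ X' ⊆ Wn n ∧
      X'.Finite ∧ X'.ncard = m ∧ ScatteredIn (Gs n) d S' X') : False := by
  classical
  -- an enumeration of m elements of X
  set e := hX.natEmbedding with he
  set x : ℕ → UVertex U Vs := fun i => (e i : UVertex U Vs) with hx
  have hxX : ∀ i, x i ∈ X := fun i => (e i).2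
  have hxinj : Function.Injective x := fun i j hij => e.injective (Subtype.ext hij)
  set Sn : ∀ n, Set (Vs n) := fun n => (fun σ => outU σ n) '' S with hSn
  set Xn : ∀ n, Set (Vs n) := fun n => (fun i => outU (x i) n) '' (Set.Iio m) with hXn
  -- the relevant eventual properties
  have hA1 : ∀ᶠ n in (U : Filter ℕ), ∀ i j : Fin m, i ≠ j →
      outU (x i) n ≠ outU (x j) n := by
    rw [Filter.eventually_all]
    intro i
    rw [Filter.eventually_all]
    intro j
    by_cases hij : i = j
    · exact Eventually.of_forall fun n h => absurd hij h
    · have := ne_eventually (a := x i) (b := x j)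
        (fun h => hij (Fin.ext (by exact_mod_cast hxinj h)))
      exact this.mono fun n hn _ => hn
  have hA2 : ∀ᶠ n in (U : Filter ℕ), ∀ σ ∈ S, ∀ i : Fin m,
      outU (x i) n ≠ outU σ n := by
    rw [Filter.eventually_all_finite hS]
    intro σ hσ
    rw [Filter.eventually_all]
    intro i
    have hxs : x i ≠ σ := fun h => (hscat.1.subset_compl_right (hxX i)) (h ▸ hσ)
    exact ne_eventually hxs
  have hA3 : ∀ᶠ n in (U : Filter ℕ), ∀ i : Fin m, outU (x i) n ∈ Wn n := by
    rw [Filter.eventually_all]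
    intro i
    exact hXW (x i) (hxX i)
  -- the eventual failure of scatteredness transfers to a walk
  set R : ℕ → Fin m × Fin m × Fin (2*d+1) → Prop := fun n t =>
    ∃ p : (Gs n).Walk (outU (x t.1) n) (outU (x t.2.1) n),
      (t.1 : ℕ) ≠ (t.2.1 : ℕ) ∧ p.length = (t.2.2 : ℕ) ∧
      ∀ z ∈ p.support, z ∉ Sn n with hR
  have hQ : ∀ᶠ n in (U : Filter ℕ), ∃ t, R n t := by
    filter_upwards [hA1, hA2, hA3] with n h1 h2 h3
    have hXncard : (Xn n).ncard = m := by
      rw [hXn]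
      rw [Set.ncard_image_of_injOn]
      · rw [← Finset.coe_range, Set.ncard_coe_finset, Finset.card_range]
      · intro a ha b hb hab
        by_contra hne
        exact h1 ⟨a, ha⟩ ⟨b, hb⟩ (fun h => hne (congrArg Fin.val h)) hab
    have hfail : ¬ ScatteredIn (Gs n) d (Sn n) (Xn n) := by
      intro hsc
      refine hno n ⟨Sn n, Xn n, hS.image _, le_trans (Set.ncard_image_le hS) hSsize,
        ?_, (Set.finite_Iio m).image _, hXncard, hsc⟩
      rintro _ ⟨i, hi, rfl⟩
      exact h3 ⟨i, hi⟩
    have hdisj : Disjoint (Xn n) (Sn n) := by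
      rw [Set.disjoint_left]
      rintro _ ⟨i, hi, rfl⟩ ⟨σ, hσ, hσe⟩
      exact h2 σ hσ ⟨i, hi⟩ hσe.symm
    rw [ScatteredIn, not_and] at hfail
    have hfail2 := hfail hdisj
    push_neg at hfail2
    obtain ⟨u, hu, v, hv, huv, p, havoid, hlen⟩ := hfail2
    obtain ⟨i, hi, rfl⟩ := hu
    obtain ⟨j, hj, rfl⟩ := hv
    have hij : i ≠ j := fun h => huv (by rw [h])
    refine ⟨(⟨i, hi⟩, ⟨j, hj⟩, ⟨p.length, by omega⟩), p, hij, rfl, havoid⟩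
  -- extract a constant choice of endpoints and length
  obtain ⟨n₀, hn₀⟩ := hQ.exists
  obtain ⟨tw, _⟩ := hn₀
  haveI : Nonempty (Fin m × Fin m × Fin (2*d+1)) := ⟨tw⟩
  set F : ℕ → Fin m × Fin m × Fin (2*d+1) :=
    fun n => if h : ∃ t, R n t then h.choose else Classical.arbitrary _ with hF
  obtain ⟨t0, ht0⟩ := ultra_const (U := U) F
  have hRt0 : ∀ᶠ n in (U : Filter ℕ), R n t0 := by
    filter_upwards [hQ, ht0] with n hn he
    rw [← he, hF]
    simp only [dif_pos hn]
    exact hn.choose_spec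
  obtain ⟨i, j, l⟩ := t0
  have hij : (i : ℕ) ≠ (j : ℕ) := by
    obtain ⟨n, hn⟩ := hRt0.exists
    exact hn.choose_spec.1
  -- the transferred walk
  set y : ℕ → ∀ n, Vs n := fun t n =>
    if h : R n (i, j, l) then (Exists.choose h).getVert t else outU (x i) n with hy
  have hyt : ∀ (t : ℕ) (n : ℕ) (h : R n (i, j, l)), y t n = (Exists.choose h).getVert t := by
    intro t n h
    rw [hy]
    simp only [dif_pos h]
  have hadj : ∀ t < (l : ℕ), ∀ᶠ n in (U : Filter ℕ), (Gs n).Adj (y t n) (y (t+1) n) := by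
    intro t ht
    filter_upwards [hRt0] with n hn
    rw [hyt t n hn, hyt (t+1) n hn]
    exact Walk.adj_getVert_succ _ (by rw [hn.choose_spec.2.1]; exact ht)
  obtain ⟨q, hqlen, hqsup⟩ := walk_transfer (l : ℕ) y hadj
  have e1 : mkU U (y 0) = x i := by
    rw [← mkU_outU (x i)]
    apply mkU_eq_iff.2
    filter_upwards [hRt0] with n hn
    rw [hyt 0 n hn, Walk.getVert_zero]
  have e2 : mkU U (y (l : ℕ)) = x j := by
    rw [← mkU_outU (x j)]
    apply mkU_eq_iff.2
    filter_upwards [hRt0] with n hn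
    rw [hyt _ n hn]
    have hl := hn.choose_spec.2.1
    calc (Exists.choose hn).getVert (l : ℕ)
        = (Exists.choose hn).getVert (Exists.choose hn).length := by rw [hl]
      _ = outU (x (j : ℕ)) n := Walk.getVert_length _
  have havoidU : ∀ z ∈ (q.copy e1 e2).support, z ∉ S := by
    intro z hz hzS
    rw [Walk.support_copy] at hz
    obtain ⟨t, ht, rfl⟩ := hqsup z hz
    have hev : ∀ᶠ n in (U : Filter ℕ), outU (mkU U (y t)) n = y t n :=
      Quotient.exact (mkU_outU (mkU U (y t)))
    obtain ⟨n, hn, hne⟩ := (hRt0.and hev).exists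
    have hmem : y t n ∈ (hn.choose).support := by
      rw [Walk.mem_support_iff_exists_getVert]
      exact ⟨t, (hyt t n hn).symm, by rw [hn.choose_spec.2.1]; exact ht⟩
    apply hn.choose_spec.2.2 (y t n) hmem
    exact ⟨mkU U (y t), hzS, hne⟩
  have hlt := hscat.2 (x i) (hxX i) (x j) (hxX j) (fun h => hij (hxinj h)) (q.copy e1 e2) havoidU
  rw [Walk.length_copy, hqlen] at hlt
  have := l.isLt
  omega



/-- (a) If `C` is strongly limit quasi-wide with margin `s`, then `C` is
quasi-wide with margin `s`. (b) If `C` is strongly uniformly limit quasi-wide with margin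
`s`, then `C` is uniformly quasi-wide with margin `s`. -/
theorem quasi_los (U : Ultrafilter ℕ) (hU : ∀ a : ℕ, {a} ∉ U)
    (C : GraphClass) (hfin : FiniteClass C) (s : ℕ → ℕ) :
    (StrongLimitQW U C s → QuasiWide C s) ∧
    (StrongUniformLimitQW U C s → UniformlyQuasiWide C s) := by
  constructor
  · intro hQW d m
    by_contra hcon
    have hc' : ∀ N : ℕ, ∃ (V : Type) (G : SimpleGraph V), C V G ∧ N ≤ Nat.card V ∧
        ¬ ∃ S X : Set V, S.Finite ∧ S.ncard ≤ s d ∧ X.Finite ∧ X.ncard = m ∧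
          ScatteredIn G d S X := by
      intro N
      by_contra h
      push_neg at h
      exact hcon ⟨N, h⟩
    choose V G hC hcard hno using fun n => hc' (n + 1)
    haveI hfinV : ∀ n, Finite (V n) := fun n => hfin _ _ (hC n)
    have hbig := uvertex_big (U := U) hU (fun n => (Set.univ : Set (V n)))
      (fun n => Set.finite_univ) (fun n => by rw [Set.ncard_univ]; exact hcard n)
    have huniv : {v : UVertex U V | ∀ᶠ n in (U : Filter ℕ), outU v n ∈ (Set.univ : Set (V n))}
        = Set.univ := Set.eq_univ_of_forall fun v => Eventually.of_forall fun n => trivial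
    rw [huniv] at hbig
    haveI hinf : Infinite (UVertex U V) := Set.infinite_univ_iff.mp hbig
    have hlim : InLimit U C (UGraph U G) :=
      ⟨V, G, hC, id, Function.injective_id, fun a b h => h⟩
    obtain ⟨S, X, hSfin, hSc, hXinf, hsc⟩ := hQW d _ _ hlim hinf
    exact core hU d m (s d) (fun n => Set.univ) S X hSfin hXinf
      (fun v _ => Eventually.of_forall fun n => trivial) hsc hSc
      (fun n h => hno n (by obtain ⟨S', X', h1, h2, _, h4, h5, h6⟩ := h
                            exact ⟨S', X', h1, h2, h4, h5, h6⟩))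
  · intro hQW d m
    by_contra hcon
    have hc' : ∀ N : ℕ, ∃ (V : Type) (G : SimpleGraph V), C V G ∧ ∃ W : Set V, N ≤ W.ncard ∧
        ¬ ∃ S X : Set V, S.Finite ∧ S.ncard ≤ s d ∧ X ⊆ W ∧ X.Finite ∧ X.ncard = m ∧
          ScatteredIn G d S X := by
      intro N
      by_contra h
      push_neg at h
      exact hcon ⟨N, fun V G hCG W hW => h V G hCG W hW⟩
    choose V G hC hrest using fun n => hc' (n + 1)
    choose W hWcard hno using hrest
    haveI hfinV : ∀ n, Finite (V n) := fun n => hfin _ _ (hC n)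
    have hbig := uvertex_big (U := U) hU W (fun n => Set.toFinite _) hWcard
    have hlim : InLimit U C (UGraph U G) :=
      ⟨V, G, hC, id, Function.injective_id, fun a b h => h⟩
    obtain ⟨S, X, hSfin, hSc, hXW, hXinf, hsc⟩ := hQW d _ _ hlim _ hbig
    exact core hU d m (s d) W S X hSfin hXinf (fun v hv => hXW hv) hsc hSc hno


end NWD
end

section
/- Let H be a bipartite graph with bipartition sides A and B, where A is infinite and every vertex of B has finite degree. Then at least one of the following holds: (a) there exists an infinite set X ⊆ A such that any two distinct vertices of X have no common neighbor in H; (b) H admits the countably infinite clique K_ω as a shallow minor at depth 1. -/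
namespace NWD

open SimpleGraph Filter

/-! ### Auxiliary machinery for Statement 11 -/

section Iter
variable {V : Type} (P : List V → V → Prop) (h : ∀ l, ∃ v, P l v)

/-- Iteratively choose elements satisfying `P` of the list of previous choices. -/
noncomputable def iterChoose : ℕ → List V
  | 0 => []
  | n + 1 => iterChoose n ++ [(h (iterChoose n)).choose]

/-- The `n`-th chosen element. -/
noncomputable def seqOf (n : ℕ) : V := (h (iterChoose P h n)).choose

lemma seqOf_spec (n : ℕ) : P (iterChoose P h n) (seqOf P h n) :=
  (h (iterChoose P h n)).choose_spec

lemma iterChoose_succ (n : ℕ) :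
    iterChoose P h (n + 1) = iterChoose P h n ++ [seqOf P h n] := rfl

lemma mem_iterChoose {x : V} {n : ℕ} :
    x ∈ iterChoose P h n ↔ ∃ m < n, x = seqOf P h m := by
  induction n with
  | zero => simp [iterChoose]
  | succ n ih =>
    rw [iterChoose_succ, List.mem_append]
    simp only [ih, List.mem_singleton]
    constructor
    · rintro (⟨m, hm, rfl⟩ | rfl)
      · exact ⟨m, hm.trans (Nat.lt_succ_self n), rfl⟩
      · exact ⟨n, Nat.lt_succ_self n, rfl⟩
    · rintro ⟨m, hm, rfl⟩
      rcases Nat.lt_succ_iff_lt_or_eq.1 hm with hm' | rfl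
      · exact Or.inl ⟨m, hm', rfl⟩
      · exact Or.inr rfl

end Iter

lemma ultra_seq (U : Ultrafilter ℕ) (hU : ∀ s : Set ℕ, s.Finite → sᶜ ∈ U)
    (T : Set ℕ) (hT : T ∈ U) (q : ℕ → Set ℕ) (hq : ∀ i ∈ T, q i ∈ U) :
    ∃ f : ℕ → ℕ, Function.Injective f ∧ (∀ k, f k ∈ T) ∧
      ∀ j k, j < k → f k ∈ q (f j) := by
  set P : List ℕ → ℕ → Prop := fun l v =>
    (∀ x ∈ l, x ∈ T) → (v ∈ T ∧ v ∉ l ∧ ∀ i ∈ l, v ∈ q i) with hP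
  have hex : ∀ l, ∃ v, P l v := by
    intro l
    by_cases hl : ∀ x ∈ l, x ∈ T
    · have hW : (T ∩ (⋂ i ∈ l.toFinset, q i) ∩ (↑l.toFinset : Set ℕ)ᶜ) ∈ U := by
        refine inter_mem (inter_mem hT ?_) (hU _ (l.toFinset.finite_toSet))
        exact Filter.biInter_finset_mem _ |>.2 fun i hi => hq i (hl i (List.mem_toFinset.1 hi))
      obtain ⟨v, hv⟩ := Ultrafilter.nonempty_of_mem hW
      refine ⟨v, fun _ => ⟨hv.1.1, ?_, fun i hi => ?_⟩⟩
      · intro hvl; exact hv.2 (by simpa using hvl)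
      · exact Set.mem_iInter₂.1 hv.1.2 i (List.mem_toFinset.2 hi)
    · exact ⟨0, fun h => absurd h hl⟩
  set f : ℕ → ℕ := seqOf P hex with hf
  have hmemT : ∀ n, ∀ x ∈ iterChoose P hex n, x ∈ T := by
    intro n
    induction n with
    | zero => intro x hx; simp [iterChoose] at hx
    | succ n ih =>
      intro x hx
      rw [iterChoose_succ, List.mem_append] at hx
      rcases hx with hx | hx
      · exact ih x hx
      · rw [List.mem_singleton] at hx
        subst hx
        exact (seqOf_spec P hex n ih).1
  have hspec : ∀ n, f n ∈ T ∧ f n ∉ iterChoose P hex n ∧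
      ∀ i ∈ iterChoose P hex n, f n ∈ q i := fun n => seqOf_spec P hex n (hmemT n)
  have hne : ∀ j k, j < k → f j ≠ f k := by
    intro j k hjk heq
    exact (hspec k).2.1 (heq ▸ (mem_iterChoose P hex).2 ⟨j, hjk, rfl⟩)
  refine ⟨f, ?_, fun k => (hspec k).1, fun j k hjk =>
    (hspec k).2.2 _ ((mem_iterChoose P hex).2 ⟨j, hjk, rfl⟩)⟩
  intro a b hab
  rcases lt_trichotomy a b with h | h | h
  · exact absurd hab (hne a b h)
  · exact h
  · exact absurd hab.symm (hne b a h)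

lemma build_minor {V : Type} (H : SimpleGraph V) (A B : Set V)
    (hdisj : Disjoint A B)
    (hadjB : ∀ u ∈ A, ∀ b, H.Adj u b → b ∈ B)
    (hB : ∀ b ∈ B, (H.neighborSet b).Finite)
    (S : Set V) (hSA : S ⊆ A) (hSinf : S.Infinite)
    (hScom : ∀ u ∈ S, ∀ v ∈ S, u ≠ v → ∃ b, H.Adj u b ∧ H.Adj v b) :
    IsShallowMinor H Komega 1 := by
  classical
  set cn : V → V → V := fun u v =>
    if h : ∃ b, H.Adj u b ∧ H.Adj v b then h.choose else u with hcn
  have cn_spec : ∀ u v, (∃ b, H.Adj u b ∧ H.Adj v b) →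
      H.Adj u (cn u v) ∧ H.Adj v (cn u v) := by
    intro u v h
    simp only [hcn, dif_pos h]
    exact h.choose_spec
  set P : List V → V → Prop := fun l v =>
    (∀ x ∈ l, x ∈ S) →
      (v ∈ S ∧ v ∉ l ∧ ∀ u ∈ l, ∀ w ∈ l, u ≠ w → ¬ H.Adj v (cn u w)) with hPdef
  have hex : ∀ l, ∃ v, P l v := by
    intro l
    by_cases hl : ∀ x ∈ l, x ∈ S
    · have hbadfin : ((↑l.toFinset : Set V) ∪
          ⋃ p ∈ ((l.toFinset ×ˢ l.toFinset).filter fun p : V × V => p.1 ≠ p.2),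
            H.neighborSet (cn p.1 p.2)).Finite := by
        refine (l.toFinset.finite_toSet).union
          (Set.Finite.biUnion (Finset.finite_toSet _) ?_)
        rintro ⟨u, w⟩ hp
        simp only [Finset.mem_coe, Finset.mem_filter, Finset.mem_product] at hp
        have hu : u ∈ S := hl u (List.mem_toFinset.1 hp.1.1)
        have hw : w ∈ S := hl w (List.mem_toFinset.1 hp.1.2)
        have hc := cn_spec u w (hScom u hu w hw hp.2)
        exact hB _ (hadjB u (hSA hu) _ hc.1)
      obtain ⟨v, hv⟩ := (hSinf.diff hbadfin).nonempty
      refine ⟨v, fun _ => ⟨hv.1, ?_, ?_⟩⟩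
      · intro hvl
        exact hv.2 (Or.inl (by simpa using hvl))
      · intro u hu w hw huw hadj
        refine hv.2 (Or.inr ?_)
        refine Set.mem_iUnion₂.2 ⟨(u, w), ?_, hadj.symm⟩
        simp only [Finset.mem_coe, Finset.mem_filter, Finset.mem_product]
        exact ⟨⟨List.mem_toFinset.2 hu, List.mem_toFinset.2 hw⟩, huw⟩
    · exact ⟨hSinf.nonempty.choose, fun h => absurd h hl⟩
  set y : ℕ → V := seqOf P hex with hy
  have hmemS : ∀ n, ∀ x ∈ iterChoose P hex n, x ∈ S := by
    intro n
    induction n with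
    | zero => intro x hx; simp [iterChoose] at hx
    | succ n ih =>
      intro x hx
      rw [iterChoose_succ, List.mem_append] at hx
      rcases hx with hx | hx
      · exact ih x hx
      · rw [List.mem_singleton] at hx
        subst hx
        exact (seqOf_spec P hex n ih).1
  have hspec : ∀ n, y n ∈ S ∧ y n ∉ iterChoose P hex n ∧
      ∀ u ∈ iterChoose P hex n, ∀ w ∈ iterChoose P hex n, u ≠ w →
        ¬ H.Adj (y n) (cn u w) := fun n => seqOf_spec P hex n (hmemS n)
  have hymem : ∀ m n, m < n → y m ∈ iterChoose P hex n :=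
    fun m n h => (mem_iterChoose P hex).2 ⟨m, h, rfl⟩
  have hyne : ∀ m n, m < n → y m ≠ y n := by
    intro m n h heq
    exact (hspec n).2.1 (heq ▸ hymem m n h)
  have hcnb : ∀ i n, i < n → H.Adj (y i) (cn (y i) (y n)) ∧
      H.Adj (y n) (cn (y i) (y n)) := fun i n h =>
    cn_spec _ _ (hScom _ (hspec i).1 _ (hspec n).1 (hyne i n h))
  set bset : ℕ → Set V := fun n => {b | ∃ i, i < n ∧ b = cn (y i) (y n)} with hbset
  have hbsetB : ∀ n, ∀ b ∈ bset n, b ∈ B ∧ H.Adj (y n) b := by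
    rintro n b ⟨i, hi, rfl⟩
    exact ⟨hadjB _ (hSA (hspec n).1) _ (hcnb i n hi).2, (hcnb i n hi).2⟩
  set α : ℕ → H.Subgraph := fun n =>
    { verts := insert (y n) (bset n)
      Adj := fun u v => (u = y n ∧ v ∈ bset n) ∨ (u ∈ bset n ∧ v = y n)
      adj_sub := by
        rintro u v (⟨rfl, hv⟩ | ⟨hu, rfl⟩)
        · exact (hbsetB _ _ hv).2
        · exact ((hbsetB _ _ hu).2).symm
      edge_vert := by
        rintro u v (⟨rfl, hv⟩ | ⟨hu, rfl⟩)
        · exact Set.mem_insert _ _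
        · exact Set.mem_insert_of_mem _ hu
      symm := by
        constructor
        rintro u v (⟨rfl, hv⟩ | ⟨hu, rfl⟩)
        · exact Or.inr ⟨hv, rfl⟩
        · exact Or.inl ⟨rfl, hu⟩ } with hα
  have hdisj2 : ∀ m n, m < n → Disjoint (α m).verts (α n).verts := by
    intro m n hmn
    rw [Set.disjoint_left]
    intro x hxm hxn
    have hyA : ∀ k, y k ∈ A := fun k => hSA (hspec k).1
    rcases hxm with rfl | hxm
    · rcases hxn with heq | hxn
      · exact hyne m n hmn heq
      · exact Set.disjoint_left.1 hdisj (hyA m) (hbsetB n _ hxn).1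
    · rcases hxn with rfl | hxn
      · exact Set.disjoint_left.1 hdisj (hyA n) (hbsetB m _ hxm).1
      · obtain ⟨i, hi, rfl⟩ := hxm
        exact (hspec n).2.2 _ (hymem i n (hi.trans hmn)) _ (hymem m n hmn)
          (hyne i m hi) (hbsetB n _ hxn).2
  refine ⟨α, ?_, ?_, ?_⟩
  · intro n
    refine ⟨⟨y n, Set.mem_insert _ _⟩, ?_⟩
    rintro ⟨x, hx⟩
    rcases Set.mem_insert_iff.1 hx with h | h
    · subst h
      exact ⟨SimpleGraph.Walk.nil.copy rfl (Subtype.ext rfl), by simp⟩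
    · have hadj : (α n).coe.Adj ⟨y n, Set.mem_insert _ _⟩ ⟨x, hx⟩ := by
        rw [SimpleGraph.Subgraph.coe_adj]
        exact Or.inl ⟨rfl, h⟩
      exact ⟨SimpleGraph.Walk.cons hadj SimpleGraph.Walk.nil, by simp⟩
  · intro m n hmn
    rcases lt_trichotomy m n with h | h | h
    · exact hdisj2 m n h
    · exact absurd h hmn
    · exact (hdisj2 n m h).symm
  · intro m n hmn
    have hne : m ≠ n := hmn.ne
    rcases hne.lt_or_gt with h | h
    · exact ⟨y m, Set.mem_insert _ _, cn (y m) (y n),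
        Set.mem_insert_of_mem _ ⟨m, h, rfl⟩, (hcnb m n h).1⟩
    · exact ⟨cn (y n) (y m), Set.mem_insert_of_mem _ ⟨n, h, rfl⟩, y n,
        Set.mem_insert _ _, ((hcnb n m h).1).symm⟩

/-- Let `H` be a bipartite graph with sides `A` and `B`, where `A` is
infinite and every vertex of `B` has finite degree. Then either there is an infinite
`X ⊆ A` whose vertices pairwise have no common neighbor, or `H` admits `K_ω` as a
`1`-shallow minor. -/
theorem aux_big {V : Type} (H : SimpleGraph V) (A B : Set V)
    (hpart : A ∪ B = Set.univ) (hdisj : Disjoint A B)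
    (hbip : ∀ ⦃u v : V⦄, H.Adj u v → (u ∈ A ∧ v ∈ B) ∨ (u ∈ B ∧ v ∈ A))
    (hA : A.Infinite) (hB : ∀ b ∈ B, (H.neighborSet b).Finite) :
    (∃ X ⊆ A, X.Infinite ∧ ∀ u ∈ X, ∀ v ∈ X, u ≠ v →
        Disjoint (H.neighborSet u) (H.neighborSet v)) ∨
    IsShallowMinor H Komega 1 := by
  classical
  have hadjB : ∀ u ∈ A, ∀ b, H.Adj u b → b ∈ B := by
    intro u hu b hadj
    rcases hbip hadj with ⟨_, hb⟩ | ⟨hu', _⟩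
    · exact hb
    · exact absurd hu' (Set.disjoint_left.1 hdisj hu)
  set g : ℕ → V := fun n => (Set.Infinite.natEmbedding A hA n : V) with hg
  have hginj : Function.Injective g := fun a b h =>
    (Set.Infinite.natEmbedding A hA).injective (Subtype.ext h)
  have hgA : ∀ n, g n ∈ A := fun n => (Set.Infinite.natEmbedding A hA n).2
  set U := Filter.hyperfilter ℕ with hUdef
  have hU : ∀ s : Set ℕ, s.Finite → sᶜ ∈ U := fun s hs => hs.compl_mem_hyperfilter
  set T : Set ℕ :=
    {i | {j | ¬ Disjoint (H.neighborSet (g i)) (H.neighborSet (g j))} ∈ U} with hTdef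
  rcases U.mem_or_compl_mem T with hT | hT
  · obtain ⟨f, hfi, hfT, hfq⟩ := ultra_seq U hU T hT
      (fun i => {j | ¬ Disjoint (H.neighborSet (g i)) (H.neighborSet (g j))})
      (fun i hi => hi)
    right
    refine build_minor H A B hdisj hadjB hB (Set.range fun k => g (f k)) ?_ ?_ ?_
    · rintro _ ⟨k, rfl⟩
      exact hgA _
    · exact Set.infinite_range_of_injective (hginj.comp hfi)
    · have key : ∀ j k, j < k → ∃ b, H.Adj (g (f j)) b ∧ H.Adj (g (f k)) b := by
        intro j k h
        obtain ⟨b, hb1, hb2⟩ := Set.not_disjoint_iff.1 (hfq j k h)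
        exact ⟨b, hb1, hb2⟩
      rintro _ ⟨j, rfl⟩ _ ⟨k, rfl⟩ hne
      have hjk : j ≠ k := fun h => hne (by rw [h])
      rcases hjk.lt_or_gt with h | h
      · exact key j k h
      · obtain ⟨b, h1, h2⟩ := key k j h
        exact ⟨b, h2, h1⟩
  · obtain ⟨f, hfi, hfT, hfq⟩ := ultra_seq U hU Tᶜ hT
      (fun i => {j | ¬ Disjoint (H.neighborSet (g i)) (H.neighborSet (g j))}ᶜ)
      (fun i hi => (Ultrafilter.compl_mem_iff_notMem).2 hi)
    left
    refine ⟨Set.range fun k => g (f k), ?_, ?_, ?_⟩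
    · rintro _ ⟨k, rfl⟩
      exact hgA _
    · exact Set.infinite_range_of_injective (hginj.comp hfi)
    · have key : ∀ j k, j < k →
          Disjoint (H.neighborSet (g (f j))) (H.neighborSet (g (f k))) := by
        intro j k h
        have := hfq j k h
        simpa using not_not.1 this
      rintro _ ⟨j, rfl⟩ _ ⟨k, rfl⟩ hne
      have hjk : j ≠ k := fun h => hne (by rw [h])
      rcases hjk.lt_or_gt with h | h
      · exact key j k h
      · exact (key k j h).symm


end NWD
end

section
/- Let G be a graph. (a) If splitter has a winning strategy in the (ℓ, m, d)-splitter game on G, then splitter has a winning strategy in the (ℓ·m, 1, d)-splitter game on G. (b) If splitter has a winning strategy in the limit d-splitter game on G, then splitter has a winning strategy in this game in which every set she picks has exactly one element. -/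
namespace NWD

open SimpleGraph Filter

/-! ### Auxiliary machinery for `one_move` -/

section OneMoveAux

variable {V : Type}

/-- A canonical list of the elements of a set (empty if the set is infinite). -/
noncomputable def listOf (S : Set V) : List V :=
  open Classical in if h : S.Finite then h.toFinset.toList else []

lemma mem_listOf {S : Set V} (h : S.Finite) {x : V} : x ∈ listOf S ↔ x ∈ S := by
  unfold listOf
  rw [dif_pos h]
  simp [Finset.mem_toList, Set.Finite.mem_toFinset]

lemma length_listOf {S : Set V} (h : S.Finite) : (listOf S).length = S.ncard := by
  unfold listOf
  rw [dif_pos h, Finset.length_toList, Set.ncard_eq_toFinset_card S h]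

/-- One step of the bookkeeping state machine: the state consists of the simulated
virtual history together with the list of pending elements still to be removed. -/
noncomputable def stepSt (σ : SplitterStrategy V) (vh : List (V × Set V)) (pend : List V)
    (v : V) : List (V × Set V) × List V :=
  match pend with
  | _ :: rest => (vh, rest)
  | [] => (vh ++ [(v, σ vh v)], (listOf (σ vh v)).tail)

/-- The state after processing a real history. -/
noncomputable def stateOf (σ : SplitterStrategy V) (hist : List (V × Set V)) :
    List (V × Set V) × List V :=
  hist.foldl (fun s mv => stepSt σ s.1 s.2 mv.1) ([], [])

/-- The next candidate vertex to remove. -/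
noncomputable def candOf (σ : SplitterStrategy V) (vh : List (V × Set V)) (pend : List V)
    (v : V) : Option V :=
  match pend with
  | x :: _ => some x
  | [] => (listOf (σ vh v)).head?

/-- Fallback set: `{v}` or `∅` according to the flag. -/
def fbSet (fb : Bool) (v : V) : Set V := if fb then {v} else ∅

/-- The one-vertex-at-a-time strategy simulating `σ`. -/
noncomputable def oneMoveStrat (G : SimpleGraph V) (d : ℕ) (σ : SplitterStrategy V)
    (fb : Bool) : SplitterStrategy V := fun hist v =>
  open Classical in
  (candOf σ (stateOf σ hist).1 (stateOf σ hist).2 v).elim (fbSet fb v)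
    (fun x => if x ∈ arenaAfter G d hist then {x} else fbSet fb v)

lemma arenaAfter_append (G : SimpleGraph V) (d : ℕ) (h : List (V × Set V)) (mv : V × Set V) :
    arenaAfter G d (h ++ [mv]) = arenaStep G d (arenaAfter G d h) mv.1 mv.2 := by
  simp [arenaAfter, List.foldl_append]

lemma stateOf_append (σ : SplitterStrategy V) (h : List (V × Set V)) (mv : V × Set V) :
    stateOf σ (h ++ [mv]) = stepSt σ (stateOf σ h).1 (stateOf σ h).2 mv.1 := by
  simp [stateOf, List.foldl_append]

lemma splitterHist_succ (σ : SplitterStrategy V) (c : ℕ → V) (n : ℕ) :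
    splitterHist σ c (n + 1) =
      splitterHist σ c n ++ [(c n, σ (splitterHist σ c n) (c n))] := rfl

lemma length_splitterHist (σ : SplitterStrategy V) (c : ℕ → V) :
    ∀ n, (splitterHist σ c n).length = n
  | 0 => rfl
  | n + 1 => by
      rw [splitterHist_succ, List.length_append, length_splitterHist σ c n]
      rfl

lemma splitterHist_congr (σ : SplitterStrategy V) {c₁ c₂ : ℕ → V} :
    ∀ {n}, (∀ k < n, c₁ k = c₂ k) → splitterHist σ c₁ n = splitterHist σ c₂ n
  | 0, _ => rfl
  | n + 1, h => by
      have hn := splitterHist_congr σ (n := n) (fun k hk => h k (hk.trans n.lt_succ_self))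
      rw [splitterHist_succ, splitterHist_succ, hn, h n n.lt_succ_self]

lemma splitterHist_getElem (σ : SplitterStrategy V) (c : ℕ → V) :
    ∀ (n k : ℕ) (h : k < n),
      (splitterHist σ c n)[k]'(by rw [length_splitterHist]; exact h) =
        (c k, σ (splitterHist σ c k) (c k)) := by
  intro n
  induction n with
  | zero => intro k h; exact absurd h (Nat.not_lt_zero k)
  | succ n ih =>
    intro k h
    have hlen : (splitterHist σ c n).length = n := length_splitterHist σ c n
    simp only [splitterHist_succ σ c n]
    rcases Nat.lt_or_ge k n with hk | hk
    · rw [List.getElem_append_left (by omega)]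
      exact ih k hk
    · have hk' : k = n := le_antisymm (Nat.lt_succ_iff.mp h) hk
      subst hk'
      rw [List.getElem_concat_length hlen.symm]

lemma oneMoveStrat_spec (G : SimpleGraph V) (d : ℕ) (σ : SplitterStrategy V) (fb : Bool)
    (hist : List (V × Set V)) (v : V) (hv : fb = true → v ∈ arenaAfter G d hist) :
    (oneMoveStrat G d σ fb hist v).Finite ∧ (oneMoveStrat G d σ fb hist v).ncard ≤ 1 ∧
      oneMoveStrat G d σ fb hist v ⊆ arenaAfter G d hist := by
  have hfb : (fbSet fb v).Finite ∧ (fbSet fb v).ncard ≤ 1 ∧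
      fbSet fb v ⊆ arenaAfter G d hist := by
    cases fb
    · simp [fbSet]
    · refine ⟨by simp [fbSet], by simp [fbSet], ?_⟩
      rw [show fbSet true v = {v} from rfl]
      exact Set.singleton_subset_iff.mpr (hv rfl)
  unfold oneMoveStrat
  cases candOf σ (stateOf σ hist).1 (stateOf σ hist).2 v with
  | none => simpa using hfb
  | some x =>
    simp only [Option.elim]
    split
    · exact ⟨Set.finite_singleton x, by simp, Set.singleton_subset_iff.mpr (by assumption)⟩
    · exact hfb

lemma oneMoveStrat_isSingleton (G : SimpleGraph V) (d : ℕ) (σ : SplitterStrategy V)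
    (hist : List (V × Set V)) (v : V) : ∃ x : V, oneMoveStrat G d σ true hist v = {x} := by
  unfold oneMoveStrat
  cases candOf σ (stateOf σ hist).1 (stateOf σ hist).2 v with
  | none => exact ⟨v, by simp [fbSet]⟩
  | some x =>
    simp only [Option.elim]
    split
    · exact ⟨x, rfl⟩
    · exact ⟨v, by simp [fbSet]⟩

/-- The key invariant relating the real play against `oneMoveStrat` to a simulated
virtual play against `σ`. -/
lemma one_move_invariant (G : SimpleGraph V) (d : ℕ) (σ : SplitterStrategy V) (fb : Bool)
    (m : ℕ) (Hc : Prop)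
    (hval : ∀ (c' : ℕ → V) (j : ℕ), ConsistentPlay G d σ c' (j + 1) →
      (σ (splitterHist σ c' j) (c' j)).Finite ∧
      σ (splitterHist σ c' j) (c' j) ⊆ arenaAfter G d (splitterHist σ c' j))
    (hcard : Hc → 1 ≤ m ∧ ∀ (c' : ℕ → V) (j : ℕ), ConsistentPlay G d σ c' (j + 1) →
      (σ (splitterHist σ c' j) (c' j)).ncard ≤ m)
    (c : ℕ → V) :
    ∀ n : ℕ, (∀ k < n, c k ∈ arenaAfter G d (splitterHist (oneMoveStrat G d σ fb) c k)) →
    ∃ c' : ℕ → V,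
      (stateOf σ (splitterHist (oneMoveStrat G d σ fb) c n)).1 =
        splitterHist σ c' (stateOf σ (splitterHist (oneMoveStrat G d σ fb) c n)).1.length ∧
      ConsistentPlay G d σ c'
        (stateOf σ (splitterHist (oneMoveStrat G d σ fb) c n)).1.length ∧
      (arenaAfter G d (splitterHist (oneMoveStrat G d σ fb) c n) \
        {x | x ∈ (stateOf σ (splitterHist (oneMoveStrat G d σ fb) c n)).2}) ⊆
        arenaAfter G d (stateOf σ (splitterHist (oneMoveStrat G d σ fb) c n)).1 ∧
      (Hc → n + (stateOf σ (splitterHist (oneMoveStrat G d σ fb) c n)).2.length ≤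
        (stateOf σ (splitterHist (oneMoveStrat G d σ fb) c n)).1.length * m) := by
  intro n
  induction n with
  | zero =>
    intro _
    refine ⟨fun _ => c 0, rfl, fun k hk => absurd hk (Nat.not_lt_zero k), ?_, ?_⟩
    · exact fun y hy => hy.1
    · intro _; simp [stateOf, splitterHist]
  | succ n ih =>
    classical
    intro hc
    obtain ⟨c', h1, h2, h3, h4⟩ := ih (fun k hk => hc k (hk.trans n.lt_succ_self))
    have hHsucc : splitterHist (oneMoveStrat G d σ fb) c (n + 1) =
        splitterHist (oneMoveStrat G d σ fb) c n ++
          [(c n, oneMoveStrat G d σ fb (splitterHist (oneMoveStrat G d σ fb) c n) (c n))] :=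
      rfl
    have hstate : stateOf σ (splitterHist (oneMoveStrat G d σ fb) c (n + 1)) =
        stepSt σ (stateOf σ (splitterHist (oneMoveStrat G d σ fb) c n)).1
          (stateOf σ (splitterHist (oneMoveStrat G d σ fb) c n)).2 (c n) := by
      rw [hHsucc, stateOf_append]
    have harena : arenaAfter G d (splitterHist (oneMoveStrat G d σ fb) c (n + 1)) =
        arenaStep G d (arenaAfter G d (splitterHist (oneMoveStrat G d σ fb) c n)) (c n)
          (oneMoveStrat G d σ fb (splitterHist (oneMoveStrat G d σ fb) c n) (c n)) := by
      rw [hHsucc, arenaAfter_append]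
    set Hn := splitterHist (oneMoveStrat G d σ fb) c n with hHn
    rcases hp : (stateOf σ Hn).2 with _ | ⟨x, rest⟩
    · -- pend = [] : a new virtual round starts
      have hstate' : stateOf σ (splitterHist (oneMoveStrat G d σ fb) c (n + 1)) =
          ((stateOf σ Hn).1 ++ [(c n, σ (stateOf σ Hn).1 (c n))],
            (listOf (σ (stateOf σ Hn).1 (c n))).tail) := by
        rw [hstate, hp]
        rfl
      have hRsub : arenaAfter G d Hn ⊆ arenaAfter G d (stateOf σ Hn).1 := by
        intro y hy
        exact h3 ⟨hy, by simp [hp]⟩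
      have hcn : c n ∈ arenaAfter G d Hn := hc n n.lt_succ_self
      have hcnVA : c n ∈ arenaAfter G d (stateOf σ Hn).1 := hRsub hcn
      classical
      set j := (stateOf σ Hn).1.length with hj
      set c'' : ℕ → V := fun k => if k = j then c n else c' k with hc''
      have hagree : ∀ k, k ≤ j → splitterHist σ c'' k = splitterHist σ c' k := by
        intro k hk
        refine splitterHist_congr σ (fun i hi => ?_)
        simp [hc'', Nat.ne_of_lt (lt_of_lt_of_le hi hk)]
      have hc''j : c'' j = c n := by simp [hc'']
      have hhist : splitterHist σ c'' j = (stateOf σ Hn).1 := by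
        rw [hagree j le_rfl, ← h1]
      have hcons'' : ConsistentPlay G d σ c'' (j + 1) := by
        intro k hk
        rcases Nat.lt_or_ge k j with hkj | hkj
        · have hck : c'' k = c' k := by simp [hc'', Nat.ne_of_lt hkj]
          rw [hck, hagree k hkj.le]
          exact h2 k hkj
        · have hkj' : k = j := le_antisymm (Nat.lt_succ_iff.mp hk) hkj
          subst hkj'
          rw [hhist, hc''j]
          exact hcnVA
      have hWval := hval c'' j hcons''
      rw [hhist, hc''j] at hWval
      obtain ⟨hWfin, hWsub⟩ := hWval
      have hvh' : splitterHist σ c'' (j + 1) =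
          (stateOf σ Hn).1 ++ [(c n, σ (stateOf σ Hn).1 (c n))] := by
        rw [splitterHist_succ, hhist, hc''j]
      have hlen' : ((stateOf σ Hn).1 ++ [(c n, σ (stateOf σ Hn).1 (c n))]).length = j + 1 := by
        simp [hj]
      refine ⟨c'', ?_, ?_, ?_, ?_⟩
      · rw [hstate']
        simp only [hlen']
        exact hvh'.symm
      · rw [hstate']
        simp only [hlen']
        exact hcons''
      · rw [hstate', harena, arenaAfter_append]
        rintro y ⟨hy1, hy2⟩
        simp only [arenaStep, Set.mem_setOf_eq] at hy1 ⊢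
        obtain ⟨hyR, hyM, p, hpl, hps⟩ := hy1
        refine ⟨hRsub hyR, ?_, p, hpl, fun z hz => hRsub (hps z hz)⟩
        intro hyW
        rw [← mem_listOf hWfin] at hyW
        rcases hL : listOf (σ (stateOf σ Hn).1 (c n)) with _ | ⟨x0, rest0⟩
        · rw [hL] at hyW; simp at hyW
        · rw [hL] at hyW
          rcases List.mem_cons.mp hyW with rfl | hmem
          · have hmove : oneMoveStrat G d σ fb Hn (c n) =
                if y ∈ arenaAfter G d Hn then {y} else fbSet fb (c n) := by
              unfold oneMoveStrat
              rw [hp]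
              show ((listOf (σ (stateOf σ Hn).1 (c n))).head?).elim _ _ = _
              rw [hL]
              rfl
            by_cases hx : y ∈ arenaAfter G d Hn
            · rw [hmove, if_pos hx] at hyM
              exact hyM rfl
            · exact hx hyR
          · refine hy2 ?_
            simp only [Set.mem_setOf_eq, hL]
            exact hmem
      · intro hHc
        obtain ⟨hm1, hcd⟩ := hcard hHc
        have hWm : (σ (stateOf σ Hn).1 (c n)).ncard ≤ m := by
          have := hcd c'' j hcons''
          rwa [hhist, hc''j] at this
        have hlenW : (listOf (σ (stateOf σ Hn).1 (c n))).length =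
            (σ (stateOf σ Hn).1 (c n)).ncard := length_listOf hWfin
        have h4' := h4 hHc
        rw [hp] at h4'
        simp only [List.length_nil, Nat.add_zero] at h4'
        rw [hstate']
        simp only [hlen', List.length_tail]
        rw [Nat.add_mul, Nat.one_mul]
        omega
    · -- pend = x :: rest
      have hstate' : stateOf σ (splitterHist (oneMoveStrat G d σ fb) c (n + 1)) =
          ((stateOf σ Hn).1, rest) := by
        rw [hstate, hp]
        rfl
      refine ⟨c', ?_, ?_, ?_, ?_⟩
      · rw [hstate']; exact h1
      · rw [hstate']; exact h2
      · rw [hstate', harena]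
        rintro y ⟨hy1, hy2⟩
        simp only [arenaStep, Set.mem_setOf_eq] at hy1
        obtain ⟨hyR, hyM, _⟩ := hy1
        refine h3 ⟨hyR, ?_⟩
        simp only [Set.mem_setOf_eq, hp, List.mem_cons]
        rintro (rfl | hmem)
        · have hmove : oneMoveStrat G d σ fb Hn (c n) =
              if y ∈ arenaAfter G d Hn then {y} else fbSet fb (c n) := by
            unfold oneMoveStrat
            rw [hp]
            rfl
          by_cases hx : y ∈ arenaAfter G d Hn
          · rw [hmove, if_pos hx] at hyM
            exact hyM rfl
          · exact hx hyR
        · exact hy2 hmem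
      · intro hHc
        have h4' := h4 hHc
        rw [hp] at h4'
        rw [hstate']
        simp only [List.length_cons] at h4' ⊢
        omega

end OneMoveAux

/-- (a) If splitter has a winning strategy in the `(ℓ, m, d)`-splitter
game on `G`, then she has one in the `(ℓ·m, 1, d)`-splitter game on `G`. (b) If splitter
has a winning strategy in the limit `d`-splitter game on `G`, then she has a winning
strategy that always picks singleton sets. -/
theorem one_move {V : Type} (G : SimpleGraph V) (d : ℕ) :
    (∀ l m : ℕ, (∃ σ : SplitterStrategy V, SplitterWinsGame G l m d σ) →
      ∃ σ : SplitterStrategy V, SplitterWinsGame G (l * m) 1 d σ) ∧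
    ((∃ σ : SplitterStrategy V, SplitterWinsLimit G d σ) →
      ∃ σ : SplitterStrategy V, SplitterWinsLimit G d σ ∧
        ∀ (hist : List (V × Set V)) (v : V), ∃ x : V, σ hist v = {x}) := by
  constructor
  · -- part (a)
    rintro l m ⟨σ, hσ⟩
    rcases Nat.eq_zero_or_pos m with rfl | hm
    · -- m = 0: the vertex set must be empty
      have hV : IsEmpty V := by
        by_contra hne
        rw [not_isEmpty_iff] at hne
        obtain ⟨v⟩ := hne
        have key : ∀ n : ℕ, ∀ k ≤ n,
            v ∈ arenaAfter G d (splitterHist σ (fun _ => v) k) := by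
          intro n
          induction n with
          | zero =>
            intro k hk
            have hk0 : k = 0 := Nat.le_zero.mp hk
            subst hk0
            simp [splitterHist, arenaAfter]
          | succ n ihn =>
            intro k hk
            rcases Nat.lt_or_ge k (n + 1) with h | h
            · exact ihn k (Nat.lt_succ_iff.mp h)
            · have hk' : k = n + 1 := le_antisymm hk h
              subst hk'
              have hcons : ConsistentPlay G d σ (fun _ => v) (n + 1) :=
                fun t ht => ihn t (Nat.lt_succ_iff.mp ht)
              obtain ⟨hfin, hcard0, -⟩ := hσ.1 (fun _ => v) n hcons
              have hW : σ (splitterHist σ (fun _ => v) n) v = ∅ :=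
                (Set.ncard_eq_zero hfin).mp (Nat.le_zero.mp hcard0)
              rw [splitterHist_succ, arenaAfter_append]
              simp only [arenaStep, Set.mem_setOf_eq]
              refine ⟨ihn n le_rfl, by simp [hW], SimpleGraph.Walk.nil, by simp, ?_⟩
              intro y hy
              simp only [SimpleGraph.Walk.support_nil, List.mem_singleton] at hy
              subst hy
              exact ihn n le_rfl
        obtain ⟨t, -, ht⟩ := hσ.2 (fun _ => v)
        exact ht (key t t le_rfl)
      exact ⟨fun _ _ => ∅, fun cc n _ => (hV.false (cc 0)).elim,
        fun cc => (hV.false (cc 0)).elim⟩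
    · refine ⟨oneMoveStrat G d σ false, fun cc n _ => ?_, ?_⟩
      · exact oneMoveStrat_spec G d σ false _ (cc n) (fun h => Bool.noConfusion h)
      · intro cc
        by_contra hcon
        push_neg at hcon
        obtain ⟨c', h1, h2, h3, h4⟩ := one_move_invariant G d σ false m True
          (fun c' j h => ⟨(hσ.1 c' j h).1, (hσ.1 c' j h).2.2⟩)
          (fun _ => ⟨hm, fun c' j h => (hσ.1 c' j h).2.1⟩)
          cc (l * m + 1) (fun k hk => hcon k (Nat.lt_succ_iff.mp hk))
        have h4' := h4 trivial
        obtain ⟨t, htl, ht⟩ := hσ.2 c'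
        refine ht (h2 t ?_)
        by_contra hlt
        push_neg at hlt
        have hmul : (stateOf σ (splitterHist (oneMoveStrat G d σ false) cc
            (l * m + 1))).1.length * m ≤ l * m :=
          le_trans (Nat.mul_le_mul_right m hlt) (Nat.mul_le_mul_right m htl)
        omega
  · -- part (b)
    rintro ⟨σ, hσ⟩
    refine ⟨oneMoveStrat G d σ true, ⟨fun cc n hcons => ?_, ?_⟩,
      fun hist v => oneMoveStrat_isSingleton G d σ hist v⟩
    · obtain ⟨hf, -, hs⟩ :=
        oneMoveStrat_spec G d σ true _ (cc n) (fun _ => hcons n n.lt_succ_self)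
      exact ⟨hf, hs⟩
    · intro cc
      by_contra hcon
      push_neg at hcon
      set st : ℕ → List (V × Set V) × List V :=
        fun n => stateOf σ (splitterHist (oneMoveStrat G d σ true) cc n) with hst
      have inv : ∀ n, ∃ c' : ℕ → V,
          (st n).1 = splitterHist σ c' (st n).1.length ∧
          ConsistentPlay G d σ c' (st n).1.length := by
        intro n
        obtain ⟨c', a, b, -, -⟩ := one_move_invariant G d σ true 0 False
          (fun c' j h => hσ.1 c' j h) (fun h => h.elim) cc n (fun k _ => hcon k)
        exact ⟨c', a, b⟩
      have hstep : ∀ n, st (n + 1) = stepSt σ (st n).1 (st n).2 (cc n) := by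
        intro n
        show stateOf σ (splitterHist (oneMoveStrat G d σ true) cc (n + 1)) = _
        rw [splitterHist_succ, stateOf_append]
      have hpre1 : ∀ n, (st n).1 <+: (st (n + 1)).1 := by
        intro n
        rw [hstep n]
        rcases hp : (st n).2 with _ | ⟨x, r⟩
        · exact List.prefix_append _ _
        · exact List.prefix_refl _
      have hpre : ∀ a b, a ≤ b → (st a).1 <+: (st b).1 := by
        intro a b hab
        induction b, hab using Nat.le_induction with
        | base => exact List.prefix_refl _
        | succ b hab ihb => exact ihb.trans (hpre1 b)
      have hjmono : ∀ a b, a ≤ b → (st a).1.length ≤ (st b).1.length :=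
        fun a b hab => (hpre a b hab).length_le
      have hreach : ∀ p n, (st n).2.length = p →
          (st n).1.length < (st (n + p + 1)).1.length := by
        intro p
        induction p with
        | zero =>
          intro n hp0
          have hp' : (st n).2 = [] := List.length_eq_zero_iff.mp hp0
          have h1 : (st (n + 1)).1.length = (st n).1.length + 1 := by
            rw [hstep n, hp']
            simp [stepSt]
          have h2 := hjmono (n + 1) (n + 0 + 1) (by omega)
          omega
        | succ p ihp =>
          intro n hp0
          rcases hL : (st n).2 with _ | ⟨x, r⟩
          · rw [hL] at hp0; simp at hp0
          · have h1 : st (n + 1) = ((st n).1, r) := by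
              rw [hstep n, hL]
              rfl
            have hr : (st (n + 1)).2.length = p := by
              rw [h1]
              show r.length = p
              rw [hL] at hp0
              simp only [List.length_cons] at hp0
              omega
            have h2' := ihp (n + 1) hr
            have h3' : (st (n + 1)).1.length = (st n).1.length := by rw [h1]
            have heq : n + 1 + p + 1 = n + (p + 1) + 1 := by omega
            rw [heq] at h2'
            omega
      have hunb : ∀ t, ∃ n, t < (st n).1.length := by
        intro t
        induction t with
        | zero =>
          refine ⟨0 + (st 0).2.length + 1, ?_⟩
          have := hreach ((st 0).2.length) 0 rfl
          omega
        | succ t iht =>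
          obtain ⟨n, hn⟩ := iht
          refine ⟨n + (st n).2.length + 1, ?_⟩
          have := hreach ((st n).2.length) n rfl
          omega
      let cvirt : ℕ → V :=
        fun t => (((st (Nat.find (hunb t))).1)[t]'(Nat.find_spec (hunb t))).1
      have hagree : ∀ (nn t : ℕ) (h : t < (st nn).1.length),
          cvirt t = ((st nn).1[t]'h).1 := by
        intro nn t h
        show (((st (Nat.find (hunb t))).1)[t]'(Nat.find_spec (hunb t))).1 = _
        rcases le_total nn (Nat.find (hunb t)) with hle | hle
        · rw [(hpre nn _ hle).getElem h]
        · rw [(hpre _ nn hle).getElem (Nat.find_spec (hunb t))]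
      have hfinal : ∀ t, cvirt t ∈ arenaAfter G d (splitterHist σ cvirt t) := by
        intro t
        obtain ⟨n₀, ht0⟩ := hunb t
        obtain ⟨c', h1, h2⟩ := inv n₀
        have hck : ∀ k (hk : k < (st n₀).1.length), c' k = cvirt k := by
          intro k hk
          rw [hagree n₀ k hk]
          have hgl := splitterHist_getElem σ c' ((st n₀).1.length) k hk
          have hge : (st n₀).1[k]'hk =
              (splitterHist σ c' ((st n₀).1.length))[k]'(by
                rw [length_splitterHist]; exact hk) :=
            List.getElem_of_eq h1 hk
          rw [hge, hgl]
        have hhq : splitterHist σ cvirt t = splitterHist σ c' t :=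
          splitterHist_congr σ (fun k hk => (hck k (hk.trans ht0)).symm)
        rw [hhq, ← hck t ht0]
        exact h2 t ht0
      obtain ⟨t, ht⟩ := hσ.2 cvirt
      exact ht (hfinal t)

end NWD
end

section
/- Let C be a class of finite graphs. Then C is winning for splitter if and only if C is limit winning for splitter. -/
namespace NWD

open SimpleGraph Filter

section Aux

variable {V : Type}

lemma splitterHist_length (σ : SplitterStrategy V) (c : ℕ → V) (n : ℕ) :
    (splitterHist σ c n).length = n := by
  induction n with
  | zero => rfl
  | succ n ih => simp [splitterHist, ih]

lemma finite_not_mem_ultra (U : Ultrafilter ℕ) (hU : ∀ a : ℕ, {a} ∉ U) :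
    ∀ s : Set ℕ, s.Finite → s ∉ U := by
  intro s hs
  obtain ⟨t, rfl⟩ := hs.exists_finset_coe
  classical
  have : ∀ t' : Finset ℕ, (↑t' : Set ℕ) ∉ U := by
    intro t'
    induction t' using Finset.induction_on with
    | empty => intro h; rw [Finset.coe_empty] at h; exact Filter.empty_notMem (↑U : Filter ℕ) h
    | @insert a u ha ih =>
      intro h
      rw [Finset.coe_insert, Set.insert_eq] at h
      rcases Ultrafilter.union_mem_iff.mp h with h1 | h2
      · exact hU a h1
      · exact ih h2
  exact this t

lemma eventually_ge_ultra (U : Ultrafilter ℕ) (hU : ∀ a : ℕ, {a} ∉ U) (N : ℕ) :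
    ∀ᶠ n in (U : Filter ℕ), N ≤ n := by
  have h1 : {n : ℕ | n < N}ᶜ ∈ U :=
    Ultrafilter.compl_mem_iff_notMem.mpr (finite_not_mem_ultra U hU _ (Set.finite_Iio N))
  have h2 : {n : ℕ | n < N}ᶜ = {n : ℕ | N ≤ n} := by ext n; simp [Nat.not_lt]
  rw [Filter.eventually_iff]
  rw [h2] at h1
  exact h1

lemma exists_uniform (U : Ultrafilter ℕ) {p : ℕ → ℕ → Prop} :
    ∀ d : ℕ, (∀ᶠ n in (U : Filter ℕ), ∃ r ≤ d, p r n) → ∃ r ≤ d, ∀ᶠ n in (U : Filter ℕ), p r n := by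
  intro d
  induction d with
  | zero =>
    intro h
    refine ⟨0, le_rfl, h.mono fun n hn => ?_⟩
    obtain ⟨r, hr, hp⟩ := hn
    rwa [Nat.le_zero.mp hr] at hp
  | succ d ihd =>
    intro h
    by_cases hd : ∀ᶠ n in (U : Filter ℕ), p (d + 1) n
    · exact ⟨d + 1, le_rfl, hd⟩
    · rw [← Ultrafilter.eventually_not] at hd
      obtain ⟨r, hr, hp⟩ := ihd ((h.and hd).mono (by
        rintro n ⟨⟨r, hr, hp⟩, hnp⟩
        rcases Nat.lt_succ_iff_lt_or_eq.mp (Nat.lt_succ_of_le hr) with h' | h'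
        · exact ⟨r, Nat.lt_succ_iff.mp h', hp⟩
        · exact absurd (h' ▸ hp) hnp))
      exact ⟨r, hr.trans (Nat.le_succ d), hp⟩

lemma chain_walk (G : SimpleGraph V) (h : ℕ → V) :
    ∀ r : ℕ, (∀ i < r, G.Adj (h i) (h (i + 1))) →
      ∃ p : G.Walk (h 0) (h r), p.length = r ∧ ∀ y ∈ p.support, ∃ i ≤ r, y = h i := by
  intro r
  induction r with
  | zero => exact fun _ => ⟨SimpleGraph.Walk.nil, rfl, by simp⟩
  | succ r ih =>
    intro hadj
    obtain ⟨p, hl, hs⟩ := ih fun i hi => hadj i (hi.trans (Nat.lt_succ_self r))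
    refine ⟨p.concat (hadj r (Nat.lt_succ_self r)), by simp [SimpleGraph.Walk.length_concat, hl], ?_⟩
    intro y hy
    rw [SimpleGraph.Walk.support_concat, List.mem_append] at hy
    rcases hy with hy | hy
    · obtain ⟨i, hi, rfl⟩ := hs y hy
      exact ⟨i, hi.trans (Nat.le_succ r), rfl⟩
    · simp at hy
      exact ⟨r + 1, le_rfl, hy⟩

end Aux

/-! ### Survival predicate and finite-game determinacy -/

def Surv {V : Type} (G : SimpleGraph V) (m d : ℕ) : ℕ → Set V → Prop
  | 0, A => A.Nonempty
  | r + 1, A => ∃ v ∈ A, ∀ W : Set V, W.Finite → W.ncard ≤ m → W ⊆ A →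
      Surv G m d r (arenaStep G d A v W)

lemma surv_nonempty {V : Type} {G : SimpleGraph V} {m d r : ℕ} {A : Set V}
    (h : Surv G m d r A) : A.Nonempty := by
  cases r with
  | zero => exact h
  | succ r => obtain ⟨v, hv, _⟩ := h; exact ⟨v, hv⟩

open scoped Classical in
/-- Splitter's strategy when connector cannot survive. -/
noncomputable def stratOfNotSurv {V : Type} (G : SimpleGraph V) (l m d : ℕ) :
    SplitterStrategy V := fun hist v =>
  if hs : ∃ W : Set V, W.Finite ∧ W.ncard ≤ m ∧ W ⊆ arenaAfter G d hist ∧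
      ¬ Surv G m d (l - hist.length - 1) (arenaStep G d (arenaAfter G d hist) v W)
  then hs.choose else ∅

lemma stratOfNotSurv_valid {V : Type} (G : SimpleGraph V) (l m d : ℕ)
    (hist : List (V × Set V)) (v : V) :
    (stratOfNotSurv G l m d hist v).Finite ∧ (stratOfNotSurv G l m d hist v).ncard ≤ m ∧
      stratOfNotSurv G l m d hist v ⊆ arenaAfter G d hist := by
  rw [stratOfNotSurv]
  split
  · rename_i hs
    exact ⟨hs.choose_spec.1, hs.choose_spec.2.1, hs.choose_spec.2.2.1⟩
  · simp

lemma splitter_of_not_surv {V : Type} (G : SimpleGraph V) (l m d : ℕ)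
    (h : ¬ Surv G m d l Set.univ) : ∃ σ : SplitterStrategy V, SplitterWinsGame G l m d σ := by
  classical
  refine ⟨stratOfNotSurv G l m d, ?_, ?_⟩
  · intro c n _
    exact ⟨(stratOfNotSurv_valid G l m d _ _).1, (stratOfNotSurv_valid G l m d _ _).2.1,
      (stratOfNotSurv_valid G l m d _ _).2.2⟩
  · intro c
    by_contra hcon
    push_neg at hcon
    have inv : ∀ n, n ≤ l →
        ¬ Surv G m d (l - n) (arenaAfter G d (splitterHist (stratOfNotSurv G l m d) c n)) := by
      intro n
      induction n with
      | zero => intro _; simpa [splitterHist, arenaAfter] using h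
      | succ n ihn =>
        intro hnl
        have hn := ihn (Nat.le_of_succ_le hnl)
        have hcn := hcon n (Nat.le_of_succ_le hnl)
        have hrw : l - n = (l - (n + 1)) + 1 := by omega
        rw [hrw] at hn
        rw [show Surv G m d ((l - (n+1)) + 1)
            (arenaAfter G d (splitterHist (stratOfNotSurv G l m d) c n)) =
            (∃ v ∈ arenaAfter G d (splitterHist (stratOfNotSurv G l m d) c n),
              ∀ W : Set V, W.Finite → W.ncard ≤ m →
                W ⊆ arenaAfter G d (splitterHist (stratOfNotSurv G l m d) c n) →
                Surv G m d (l - (n+1)) (arenaStep G d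
                  (arenaAfter G d (splitterHist (stratOfNotSurv G l m d) c n)) v W)) from rfl]
          at hn
        push_neg at hn
        obtain ⟨W, hW1, hW2, hW3, hW4⟩ := hn (c n) hcn
        have hex : ∃ W' : Set V, W'.Finite ∧ W'.ncard ≤ m ∧
            W' ⊆ arenaAfter G d (splitterHist (stratOfNotSurv G l m d) c n) ∧
            ¬ Surv G m d (l - (splitterHist (stratOfNotSurv G l m d) c n).length - 1)
              (arenaStep G d (arenaAfter G d (splitterHist (stratOfNotSurv G l m d) c n))
                (c n) W') := by
          refine ⟨W, hW1, hW2, hW3, ?_⟩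
          rw [splitterHist_length, show l - n - 1 = l - (n+1) from by omega]
          exact hW4
        rw [show splitterHist (stratOfNotSurv G l m d) c (n+1) =
            splitterHist (stratOfNotSurv G l m d) c n ++
              [(c n, stratOfNotSurv G l m d (splitterHist (stratOfNotSurv G l m d) c n) (c n))]
          from rfl, arenaAfter_append]
        have hval : stratOfNotSurv G l m d (splitterHist (stratOfNotSurv G l m d) c n) (c n)
            = hex.choose := by rw [stratOfNotSurv]; exact dif_pos hex
        rw [hval]
        have hspec := hex.choose_spec
        rw [show l - (n+1) = l - (splitterHist (stratOfNotSurv G l m d) c n).length - 1 from by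
          rw [splitterHist_length]; omega]
        exact hspec.2.2.2
    have hfin := inv l le_rfl
    rw [Nat.sub_self] at hfin
    exact hfin ⟨c l, hcon l le_rfl⟩





/-! ### Forward direction: winning implies limit winning -/

def trHist {V : Type} {Vs : ℕ → Type} (σs : ∀ n, SplitterStrategy (Vs n))
    (rep : V → ∀ n, Vs n) (n : ℕ) (hist : List (V × Set V)) : List (Vs n × Set (Vs n)) :=
  hist.foldl (fun l mv => l ++ [(rep mv.1 n, σs n l (rep mv.1 n))]) []

lemma trHist_append {V : Type} {Vs : ℕ → Type} (σs : ∀ n, SplitterStrategy (Vs n))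
    (rep : V → ∀ n, Vs n) (n : ℕ) (hist : List (V × Set V)) (mv : V × Set V) :
    trHist σs rep n (hist ++ [mv]) =
      trHist σs rep n hist ++ [(rep mv.1 n, σs n (trHist σs rep n hist) (rep mv.1 n))] := by
  simp [trHist, List.foldl_append]

/-- Splitter's strategy on a subgraph of an ultraproduct, simulating coordinatewise
strategies. -/
def sigH (U : Ultrafilter ℕ) {V : Type} (G : SimpleGraph V) (d : ℕ) {Vs : ℕ → Type}
    (σs : ∀ n, SplitterStrategy (Vs n)) (rep : V → ∀ n, Vs n) : SplitterStrategy V :=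
  fun hist v => {y | y ∈ arenaAfter G d hist ∧
    ∀ᶠ n in (U : Filter ℕ), rep y n ∈ σs n (trHist σs rep n hist) (rep v n)}

lemma trHist_splitterHist (U : Ultrafilter ℕ) {V : Type} (G : SimpleGraph V) (d : ℕ)
    {Vs : ℕ → Type} (σs : ∀ n, SplitterStrategy (Vs n)) (rep : V → ∀ n, Vs n)
    (c : ℕ → V) (n k : ℕ) :
    trHist σs rep n (splitterHist (sigH U G d σs rep) c k) =
      splitterHist (σs n) (fun j => rep (c j) n) k := by
  induction k with
  | zero => rfl
  | succ k ih =>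
    rw [show splitterHist (sigH U G d σs rep) c (k+1) =
        splitterHist (sigH U G d σs rep) c k ++
          [(c k, sigH U G d σs rep (splitterHist (sigH U G d σs rep) c k) (c k))] from rfl,
      trHist_append, ih]
    rfl

lemma key_forward (U : Ultrafilter ℕ) {V : Type} (G : SimpleGraph V) (d : ℕ) {Vs : ℕ → Type}
    (Gs : ∀ n, SimpleGraph (Vs n)) (σs : ∀ n, SplitterStrategy (Vs n)) (rep : V → ∀ n, Vs n)
    (hAdj : ∀ ⦃u w : V⦄, G.Adj u w → ∀ᶠ n in (U : Filter ℕ), (Gs n).Adj (rep u n) (rep w n))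
    (c : ℕ → V) :
    ∀ k : ℕ, ∀ x : V, x ∈ arenaAfter G d (splitterHist (sigH U G d σs rep) c k) →
      ∀ᶠ n in (U : Filter ℕ),
        rep x n ∈ arenaAfter (Gs n) d (splitterHist (σs n) (fun j => rep (c j) n) k) := by
  intro k
  induction k with
  | zero =>
    intro x _
    exact Eventually.of_forall fun n => Set.mem_univ _
  | succ k ih =>
    intro x hx
    rw [show splitterHist (sigH U G d σs rep) c (k+1) =
        splitterHist (sigH U G d σs rep) c k ++
          [(c k, sigH U G d σs rep (splitterHist (sigH U G d σs rep) c k) (c k))] from rfl,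
      arenaAfter_append] at hx
    obtain ⟨hxA, hxW, p, hplen, hpsup⟩ := hx
    have hxW' : ∀ᶠ n in (U : Filter ℕ),
        rep x n ∉ σs n (splitterHist (σs n) (fun j => rep (c j) n) k) (rep (c k) n) := by
      rw [Ultrafilter.eventually_not]
      intro hcont
      refine hxW ⟨hxA, ?_⟩
      exact hcont.mono fun n hn => by
        rw [trHist_splitterHist U G d σs rep c n k]; exact hn
    have wt : ∀ (u w : V) (q : G.Walk u w),
        (∀ y ∈ q.support, y ∈ arenaAfter G d (splitterHist (sigH U G d σs rep) c k)) →
        ∀ᶠ n in (U : Filter ℕ), ∃ q' : (Gs n).Walk (rep u n) (rep w n),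
          q'.length ≤ q.length ∧ ∀ y ∈ q'.support,
            y ∈ arenaAfter (Gs n) d (splitterHist (σs n) (fun j => rep (c j) n) k) := by
      intro u w q
      induction q with
      | nil =>
        intro hsup
        refine (ih _ (hsup _ (SimpleGraph.Walk.start_mem_support _))).mono
          fun n hn => ⟨SimpleGraph.Walk.nil, by simp, ?_⟩
        intro y hy
        rw [SimpleGraph.Walk.support_nil, List.mem_singleton] at hy
        rwa [hy]
      | @cons a b w' hab q' ihq =>
        intro hsup
        have e2 := ihq fun y hy => hsup y (by rw [SimpleGraph.Walk.support_cons]; exact List.mem_cons_of_mem _ hy)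
        filter_upwards [hAdj hab, e2, ih a (hsup a (SimpleGraph.Walk.start_mem_support _))] with n f1 f2 f3
        obtain ⟨q'', hq1, hq2⟩ := f2
        refine ⟨SimpleGraph.Walk.cons f1 q'', by simpa using Nat.succ_le_succ hq1, ?_⟩
        intro y hy
        rw [SimpleGraph.Walk.support_cons, List.mem_cons] at hy
        rcases hy with rfl | hy
        · exact f3
        · exact hq2 y hy
    filter_upwards [ih x hxA, hxW', wt (c k) x p hpsup] with n f1 f2 f3
    obtain ⟨q, hq1, hq2⟩ := f3
    rw [show splitterHist (σs n) (fun j => rep (c j) n) (k+1) =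
        splitterHist (σs n) (fun j => rep (c j) n) k ++
          [(rep (c k) n, σs n (splitterHist (σs n) (fun j => rep (c j) n) k) (rep (c k) n))]
      from rfl, arenaAfter_append]
    exact ⟨f1, f2, q, hq1.trans hplen, hq2⟩

lemma limit_of_winning (U : Ultrafilter ℕ) (C : GraphClass) (hw : WinningForSplitter C) :
    LimitWinningForSplitter U C := by
  intro d V G hlim
  obtain ⟨Vs, Gs, hC, f, hfinj, hfadj⟩ := hlim
  obtain ⟨l, m, hwin⟩ := hw d
  choose σs hσs using fun n => hwin (Vs n) (Gs n) (hC n)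
  classical
  set rep : V → ∀ n, Vs n := fun x => (f x).out with hrepdef
  have hAdj : ∀ ⦃u w : V⦄, G.Adj u w →
      ∀ᶠ n in (U : Filter ℕ), (Gs n).Adj (rep u n) (rep w n) := by
    intro u w huw
    have h2 := hfadj huw
    rw [← Quotient.out_eq (f u), ← Quotient.out_eq (f w)] at h2
    exact h2
  have hne : ∀ ⦃u w : V⦄, u ≠ w → ∀ᶠ n in (U : Filter ℕ), rep u n ≠ rep w n := by
    intro u w huw
    refine Ultrafilter.eventually_not.mpr ?_
    intro he
    refine huw (hfinj ?_)
    rw [← Quotient.out_eq (f u), ← Quotient.out_eq (f w)]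
    exact Quotient.sound he
  refine ⟨sigH U G d σs rep, ?_, ?_⟩
  · intro c n hcons
    constructor
    · -- finiteness of splitter's move
      by_contra hinf
      have hinf' : (sigH U G d σs rep (splitterHist (sigH U G d σs rep) c n) (c n)).Infinite :=
        hinf
      obtain ⟨t, hts, htc⟩ := hinf'.exists_subset_card_eq (m + 1)
      have hconsn : ∀ᶠ n' in (U : Filter ℕ),
          ConsistentPlay (Gs n') d (σs n') (fun j => rep (c j) n') (n + 1) := by
        have hall : ∀ k ∈ Finset.range (n+1), ∀ᶠ n' in (U : Filter ℕ),
            rep (c k) n' ∈ arenaAfter (Gs n') d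
              (splitterHist (σs n') (fun j => rep (c j) n') k) :=
          fun k hk => key_forward U G d Gs σs rep hAdj c k (c k)
            (hcons k (Finset.mem_range.mp hk))
        refine ((eventually_all_finset (Finset.range (n+1))).mpr hall).mono ?_
        intro n' h' k hk
        exact h' k (Finset.mem_range.mpr hk)
      have hbound : ∀ᶠ n' in (U : Filter ℕ),
          (σs n' (splitterHist (σs n') (fun j => rep (c j) n') n) (rep (c n) n')).Finite ∧
          (σs n' (splitterHist (σs n') (fun j => rep (c j) n') n) (rep (c n) n')).ncard ≤ m :=
        hconsn.mono fun n' hcn =>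
          ⟨((hσs n').1 _ n hcn).1, ((hσs n').1 _ n hcn).2.1⟩
      have hmem : ∀ y ∈ t, ∀ᶠ n' in (U : Filter ℕ),
          rep y n' ∈ σs n' (splitterHist (σs n') (fun j => rep (c j) n') n) (rep (c n) n') := by
        intro y hy
        have h2 := (hts hy).2
        exact h2.mono fun n' hn' => by
          rwa [trHist_splitterHist U G d σs rep c n' n] at hn'
      have hpair : ∀ y ∈ t, ∀ z ∈ t, ∀ᶠ n' in (U : Filter ℕ), y ≠ z → rep y n' ≠ rep z n' := by
        intro y _ z _
        by_cases hyz : y = z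
        · exact Eventually.of_forall fun n' h => absurd hyz h
        · exact (hne hyz).mono fun n' h _ => h
      have big := hbound.and (((eventually_all_finset t).mpr hmem).and
        ((eventually_all_finset t).mpr fun y hy => (eventually_all_finset t).mpr
          fun z hz => hpair y hy z hz))
      obtain ⟨n', ⟨hbf, hbn⟩, hmemn, hpairn⟩ := big.exists
      have hinj : Set.InjOn (fun y => rep y n') (↑t : Set V) := by
        intro y hy z hz e
        by_contra hne'
        exact hpairn y hy z hz hne' e
      have hsub : (↑(t.image (fun y => rep y n')) : Set (Vs n')) ⊆
          σs n' (splitterHist (σs n') (fun j => rep (c j) n') n) (rep (c n) n') := by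
        intro z hz
        rw [Finset.coe_image] at hz
        obtain ⟨y, hy, rfl⟩ := hz
        exact hmemn y hy
      have : m + 1 ≤ m := by
        calc m + 1 = t.card := htc.symm
          _ = (t.image (fun y => rep y n')).card := (Finset.card_image_of_injOn hinj).symm
          _ = (↑(t.image (fun y => rep y n')) : Set (Vs n')).ncard :=
              (Set.ncard_coe_finset _).symm
          _ ≤ (σs n' (splitterHist (σs n') (fun j => rep (c j) n') n) (rep (c n) n')).ncard :=
              Set.ncard_le_ncard hsub hbf
          _ ≤ m := hbn
      omega
    · exact fun y hy => hy.1
  · intro c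
    by_contra hcont
    push_neg at hcont
    have hall : ∀ k ∈ Finset.range (l+1), ∀ᶠ n' in (U : Filter ℕ),
        rep (c k) n' ∈ arenaAfter (Gs n') d (splitterHist (σs n') (fun j => rep (c j) n') k) :=
      fun k _ => key_forward U G d Gs σs rep hAdj c k (c k) (hcont k)
    obtain ⟨n', hn'⟩ := ((eventually_all_finset (Finset.range (l+1))).mpr hall).exists
    obtain ⟨k, hkl, hk⟩ := (hσs n').2 fun j => rep (c j) n'
    exact hk (hn' k (Finset.mem_range.mpr (Nat.lt_succ_of_le hkl)))




/-! ### Reverse direction: limit winning implies winning -/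

def trArena (U : Ultrafilter ℕ) {Vs : ℕ → Type} (Gs : ∀ n, SimpleGraph (Vs n)) (d : ℕ)
    (n : ℕ) (hist : List (UVertex U Vs × Set (UVertex U Vs))) : Set (Vs n) :=
  hist.foldl (fun A mv => arenaStep (Gs n) d A (mv.1.out n)
    (((fun q : UVertex U Vs => q.out n) '' mv.2) ∩ A)) Set.univ

lemma trArena_append (U : Ultrafilter ℕ) {Vs : ℕ → Type} (Gs : ∀ n, SimpleGraph (Vs n))
    (d n : ℕ) (hist : List (UVertex U Vs × Set (UVertex U Vs)))
    (x : UVertex U Vs) (S : Set (UVertex U Vs)) :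
    trArena U Gs d n (hist ++ [(x, S)]) =
      arenaStep (Gs n) d (trArena U Gs d n hist) (x.out n)
        (((fun q : UVertex U Vs => q.out n) '' S) ∩ trArena U Gs d n hist) := by
  simp [trArena, List.foldl_append]

open scoped Classical in
noncomputable def gmove (U : Ultrafilter ℕ) {Vs : ℕ → Type} (Gs : ∀ n, SimpleGraph (Vs n))
    (d : ℕ) (hne : ∀ n, Nonempty (Vs n)) (k : ℕ)
    (hist : List (UVertex U Vs × Set (UVertex U Vs))) (n : ℕ) : Vs n :=
  if hs : ∃ v ∈ trArena U Gs d n hist, ∀ W : Set (Vs n), W.Finite → W.ncard ≤ n →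
      W ⊆ trArena U Gs d n hist →
      Surv (Gs n) n d (n - k - 1) (arenaStep (Gs n) d (trArena U Gs d n hist) v W)
  then hs.choose else (hne n).some

noncomputable def histSeq (U : Ultrafilter ℕ) {Vs : ℕ → Type} (Gs : ∀ n, SimpleGraph (Vs n))
    (d : ℕ) (hne : ∀ n, Nonempty (Vs n)) (σ : SplitterStrategy (UVertex U Vs)) :
    ℕ → List (UVertex U Vs × Set (UVertex U Vs))
  | 0 => []
  | k + 1 => histSeq U Gs d hne σ k ++
      ([(Quotient.mk (prodSetoid U Vs) (gmove U Gs d hne k (histSeq U Gs d hne σ k)),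
        σ (histSeq U Gs d hne σ k)
          (Quotient.mk (prodSetoid U Vs) (gmove U Gs d hne k (histSeq U Gs d hne σ k))))] :
        List (UVertex U Vs × Set (UVertex U Vs)))

lemma histSeq_length (U : Ultrafilter ℕ) {Vs : ℕ → Type} (Gs : ∀ n, SimpleGraph (Vs n))
    (d : ℕ) (hne : ∀ n, Nonempty (Vs n)) (σ : SplitterStrategy (UVertex U Vs)) (k : ℕ) :
    (histSeq U Gs d hne σ k).length = k := by
  induction k with
  | zero => rfl
  | succ k ih => simp [histSeq, ih]

lemma rev_lemma (U : Ultrafilter ℕ) {Vs : ℕ → Type} (Gs : ∀ n, SimpleGraph (Vs n)) (d : ℕ)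
    (hne : ∀ n, Nonempty (Vs n)) (σ : SplitterStrategy (UVertex U Vs)) :
    ∀ k : ℕ, ∀ g : ∀ n, Vs n,
      (∀ᶠ n in (U : Filter ℕ), g n ∈ trArena U Gs d n (histSeq U Gs d hne σ k)) →
      Quotient.mk (prodSetoid U Vs) g ∈ arenaAfter (UGraph U Gs) d (histSeq U Gs d hne σ k) := by
  intro k
  induction k with
  | zero => intro g _; exact Set.mem_univ _
  | succ k ih =>
    intro g hg
    set ck : UVertex U Vs := Quotient.mk (prodSetoid U Vs) (gmove U Gs d hne k (histSeq U Gs d hne σ k)) with hck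
    set Sk := σ (histSeq U Gs d hne σ k) ck with hSkdef
    have hstep : histSeq U Gs d hne σ (k+1) = histSeq U Gs d hne σ k ++ [(ck, Sk)] := by
      rw [hck, hSkdef]
      simp only [histSeq]
      rfl
    rw [hstep, arenaAfter_append]
    rw [hstep] at hg
    have hg' : ∀ᶠ n in (U : Filter ℕ), g n ∈
        arenaStep (Gs n) d (trArena U Gs d n (histSeq U Gs d hne σ k)) (ck.out n)
          (((fun q : UVertex U Vs => q.out n) '' Sk) ∩ trArena U Gs d n (histSeq U Gs d hne σ k)) := by
      refine hg.mono fun n hn => ?_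
      rwa [trArena_append] at hn
    refine ⟨ih g (hg'.mono fun n hn => hn.1), ?_, ?_⟩
    · intro hmem
      have hout0 : (prodSetoid U Vs).r (Quotient.mk (prodSetoid U Vs) g).out g :=
        Quotient.exact (Quotient.out_eq _)
      have hout : ∀ᶠ n in (U : Filter ℕ), (Quotient.mk (prodSetoid U Vs) g).out n = g n := hout0
      obtain ⟨n, hnW, hout_n, hnA⟩ :=
        ((hg'.mono fun n hn => hn.2.1).and (hout.and (hg'.mono fun n hn => hn.1))).exists
      exact hnW ⟨⟨Quotient.mk (prodSetoid U Vs) g, hmem, hout_n⟩, hnA⟩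
    · have hev : ∀ᶠ n in (U : Filter ℕ), ∃ r ≤ d, ∃ p : (Gs n).Walk (ck.out n) (g n),
          p.length = r ∧ ∀ y ∈ p.support, y ∈ trArena U Gs d n (histSeq U Gs d hne σ k) := by
        refine hg'.mono fun n hn => ?_
        obtain ⟨p, hl, hs⟩ := hn.2.2
        exact ⟨p.length, hl, p, rfl, hs⟩
      obtain ⟨r, hrd, hr⟩ := exists_uniform U d hev
      classical
      set sv : ℕ → ∀ n, Vs n := fun i n =>
        if hn : ∃ p : (Gs n).Walk (ck.out n) (g n), p.length = r ∧
            ∀ y ∈ p.support, y ∈ trArena U Gs d n (histSeq U Gs d hne σ k)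
        then hn.choose.getVert i else g n with hsv
      have hprops : ∀ᶠ n in (U : Filter ℕ), (sv 0 n = ck.out n) ∧ (sv r n = g n) ∧
          (∀ i, i < r → (Gs n).Adj (sv i n) (sv (i+1) n)) ∧
          (∀ i, sv i n ∈ trArena U Gs d n (histSeq U Gs d hne σ k)) := by
        refine hr.mono fun n hn => ?_
        have hrw : ∀ i, sv i n = hn.choose.getVert i := by
          intro i
          simp only [hsv]
          exact dif_pos hn
        obtain ⟨hlen, hsup⟩ := hn.choose_spec
        refine ⟨?_, ?_, ?_, ?_⟩
        · rw [hrw 0, SimpleGraph.Walk.getVert_zero]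
        · have hend := SimpleGraph.Walk.getVert_length hn.choose
          rw [hlen] at hend
          rw [hrw r, hend]
        · intro i hi
          rw [hrw i, hrw (i+1)]
          exact hn.choose.adj_getVert_succ (by rw [hlen]; exact hi)
        · intro i
          rw [hrw i]
          apply hsup
          by_cases hile : i ≤ hn.choose.length
          · exact SimpleGraph.Walk.mem_support_iff_exists_getVert.mpr ⟨i, rfl, hile⟩
          · rw [SimpleGraph.Walk.getVert_of_length_le _ (le_of_not_ge hile)]
            exact SimpleGraph.Walk.end_mem_support _
      have hsmem : ∀ i, Quotient.mk (prodSetoid U Vs) (sv i) ∈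
          arenaAfter (UGraph U Gs) d (histSeq U Gs d hne σ k) :=
        fun i => ih (sv i) (hprops.mono fun n hn => hn.2.2.2 i)
      have hadj : ∀ i, i < r → (UGraph U Gs).Adj (Quotient.mk (prodSetoid U Vs) (sv i))
          (Quotient.mk (prodSetoid U Vs) (sv (i+1))) :=
        fun i hi => hprops.mono fun n hn => hn.2.2.1 i hi
      obtain ⟨p, hpl, hps⟩ :=
        chain_walk (UGraph U Gs) (fun i => Quotient.mk (prodSetoid U Vs) (sv i)) r hadj
      have h0 : Quotient.mk (prodSetoid U Vs) (sv 0) = ck := by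
        rw [← Quotient.out_eq ck]
        exact Quotient.sound (hprops.mono fun n hn => hn.1)
      have hrq : Quotient.mk (prodSetoid U Vs) (sv r) = Quotient.mk (prodSetoid U Vs) g :=
        Quotient.sound (hprops.mono fun n hn => hn.2.1)
      refine ⟨p.copy h0 hrq, ?_, ?_⟩
      · exact (le_of_eq ((SimpleGraph.Walk.length_copy p h0 hrq).trans hpl)).trans hrd
      · intro y hy
        replace hy : y ∈ p.support := by
          rw [← SimpleGraph.Walk.support_copy p h0 hrq]; exact hy
        obtain ⟨i, _, rfl⟩ := hps y hy
        exact hsmem i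

lemma winning_of_limit (U : Ultrafilter ℕ) (hU : ∀ a : ℕ, {a} ∉ U) (C : GraphClass)
    (hfin : FiniteClass C) (h : LimitWinningForSplitter U C) : WinningForSplitter C := by
  intro d
  by_contra hno
  push_neg at hno
  have hVs : ∀ n : ℕ, ∃ (V : Type) (G : SimpleGraph V), C V G ∧
      ∀ σ : SplitterStrategy V, ¬ SplitterWinsGame G n n d σ := fun n => hno n n
  choose Vs Gs hC hno' using hVs
  have hSurv : ∀ n, Surv (Gs n) n d n Set.univ := by
    intro n
    by_contra hs
    obtain ⟨σ', hσ'⟩ := splitter_of_not_surv (Gs n) n n d hs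
    exact hno' n σ' hσ'
  have hne : ∀ n, Nonempty (Vs n) := by
    intro n
    obtain ⟨v, _⟩ := surv_nonempty (hSurv n)
    exact ⟨v⟩
  obtain ⟨σ, hσ1, hσ2⟩ := h d (UVertex U Vs) (UGraph U Gs)
    ⟨Vs, Gs, hC, id, fun a b e => e, fun u v hadj => hadj⟩
  set c : ℕ → UVertex U Vs :=
    fun k => Quotient.mk (prodSetoid U Vs) (gmove U Gs d hne k (histSeq U Gs d hne σ k)) with hc
  have hhist : ∀ k, splitterHist σ c k = histSeq U Gs d hne σ k := by
    intro k
    induction k with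
    | zero => rfl
    | succ k ih =>
      rw [show splitterHist σ c (k+1) =
        splitterHist σ c k ++ [(c k, σ (splitterHist σ c k) (c k))] from rfl, ih, hc]
      simp only [histSeq]
  have main : ∀ k, ConsistentPlay (UGraph U Gs) d σ c k ∧
      ∀ᶠ n in (U : Filter ℕ), Surv (Gs n) n d (n - k)
        (trArena U Gs d n (histSeq U Gs d hne σ k)) := by
    intro k
    induction k with
    | zero =>
      refine ⟨fun j hj => absurd hj (Nat.not_lt_zero j), Eventually.of_forall fun n => ?_⟩
      simpa [trArena, histSeq] using hSurv n
    | succ k ih =>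
      obtain ⟨hcons, hsurv⟩ := ih
      have hlenk : (histSeq U Gs d hne σ k).length = k := histSeq_length U Gs d hne σ k
      have hmv : ∀ᶠ n in (U : Filter ℕ),
          gmove U Gs d hne k (histSeq U Gs d hne σ k) n ∈
            trArena U Gs d n (histSeq U Gs d hne σ k) ∧
          ∀ W : Set (Vs n), W.Finite → W.ncard ≤ n →
            W ⊆ trArena U Gs d n (histSeq U Gs d hne σ k) →
            Surv (Gs n) n d (n - k - 1)
              (arenaStep (Gs n) d (trArena U Gs d n (histSeq U Gs d hne σ k))
                (gmove U Gs d hne k (histSeq U Gs d hne σ k) n) W) := by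
        filter_upwards [hsurv, eventually_ge_ultra U hU (k+1)] with n h1 h2
        rw [show n - k = (n - k - 1) + 1 from by omega] at h1
        have h1' : ∃ v ∈ trArena U Gs d n (histSeq U Gs d hne σ k),
            ∀ W : Set (Vs n), W.Finite → W.ncard ≤ n →
              W ⊆ trArena U Gs d n (histSeq U Gs d hne σ k) →
              Surv (Gs n) n d (n - k - 1)
                (arenaStep (Gs n) d (trArena U Gs d n (histSeq U Gs d hne σ k)) v W) := h1
        have hgm : gmove U Gs d hne k (histSeq U Gs d hne σ k) n = h1'.choose := dif_pos h1'
        rw [hgm]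
        exact ⟨h1'.choose_spec.1, h1'.choose_spec.2⟩
      have hck : c k ∈ arenaAfter (UGraph U Gs) d (histSeq U Gs d hne σ k) :=
        rev_lemma U Gs d hne σ k (gmove U Gs d hne k (histSeq U Gs d hne σ k))
          (hmv.mono fun n hn => hn.1)
      have hcons' : ConsistentPlay (UGraph U Gs) d σ c (k+1) := by
        intro j hj
        rcases Nat.lt_succ_iff_lt_or_eq.mp hj with hj' | rfl
        · exact hcons j hj'
        · rw [hhist j]; exact hck
      refine ⟨hcons', ?_⟩
      have hS := hσ1 c k hcons'
      rw [hhist k] at hS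
      set Sk := σ (histSeq U Gs d hne σ k) (c k) with hSkdef
      have houtg : ∀ᶠ n in (U : Filter ℕ),
          (c k).out n = gmove U Gs d hne k (histSeq U Gs d hne σ k) n := by
        have he : Quotient.mk (prodSetoid U Vs) ((c k).out) =
            Quotient.mk (prodSetoid U Vs) (gmove U Gs d hne k (histSeq U Gs d hne σ k)) := by
          rw [Quotient.out_eq]
        exact Quotient.exact he
      filter_upwards [hmv, eventually_ge_ultra U hU Sk.ncard, houtg] with n h1 h2 h3
      have hstep : histSeq U Gs d hne σ (k+1) = histSeq U Gs d hne σ k ++ [(c k, Sk)] := by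
        rw [hSkdef, hc]
        simp only [histSeq]
      rw [hstep, trArena_append]
      have hWfin : (((fun q : UVertex U Vs => q.out n) '' Sk) ∩
          trArena U Gs d n (histSeq U Gs d hne σ k)).Finite := (hS.1.image _).inter_of_left _
      have hWcard : (((fun q : UVertex U Vs => q.out n) '' Sk) ∩
          trArena U Gs d n (histSeq U Gs d hne σ k)).ncard ≤ n := by
        have h4 := Set.ncard_le_ncard
          (Set.inter_subset_left (s := ((fun q : UVertex U Vs => q.out n) '' Sk))
            (t := trArena U Gs d n (histSeq U Gs d hne σ k))) (hS.1.image _)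
        have h5 := Set.ncard_image_le (f := fun q : UVertex U Vs => q.out n) hS.1
        omega
      have h6 := h1.2 _ hWfin hWcard Set.inter_subset_right
      rw [show n - (k+1) = n - k - 1 from by omega, h3]
      exact h6
  obtain ⟨k, hk⟩ := hσ2 c
  exact hk ((main (k+1)).1 k (Nat.lt_succ_self k))


/-- `C` is winning for splitter iff `C` is limit winning for splitter. -/
theorem game_equiv (U : Ultrafilter ℕ) (hU : ∀ a : ℕ, {a} ∉ U)
    (C : GraphClass) (hfin : FiniteClass C) :
    WinningForSplitter C ↔ LimitWinningForSplitter U C :=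
  ⟨fun h => limit_of_winning U C h, fun h => winning_of_limit U hU C hfin h⟩

end NWD
end
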